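/- arXiv:2112.06781 — 9 statements merged into one kernel-verified Lean document; each statement's English description precedes it below -/
import Mathlib

section
/- If X is a proper metric space (every closed ball is compact) with finite geodesic defect ν(X), then X is ν(X)-geodesic, i.e., the infimum in the definition of the geodesic defect is attained. -/
def IsGeodesicWithDefect (X : Type*) [MetricSpace X] (ν : ℝ) : Prop :=
  ∀ x y : X, ∀ r s : ℝ, 0 ≤ r → 0 ≤ s → r + s = dist x y →
    ∃ z : X, dist x z ≤ r + ν ∧ dist y z ≤ s + ν

noncomputable def geodesicDefect (X : Type*) [MetricSpace X] : EReal :=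
  sInf {n : EReal | ∃ ν : ℝ, 0 ≤ ν ∧ IsGeodesicWithDefect X ν ∧ n = (ν : EReal)}

/-- In a proper metric space with finite geodesic defect, the infimum in the
definition of the geodesic defect is attained: `X` is `ν(X)`-geodesic. -/
theorem stmt2 (X : Type*) [MetricSpace X] [ProperSpace X]
    (hfin : geodesicDefect X ≠ ⊤) :
    IsGeodesicWithDefect X (geodesicDefect X).toReal := by
  set S : Set EReal := {n : EReal | ∃ ν : ℝ, 0 ≤ ν ∧ IsGeodesicWithDefect X ν ∧ n = (ν : EReal)}
    with hS
  have h0 : (0 : EReal) ≤ sInf S := by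
    apply le_sInf
    rintro n ⟨ν, hν0, _, rfl⟩
    exact_mod_cast hν0
  have hbot : sInf S ≠ ⊥ := by
    intro h
    rw [h] at h0
    exact absurd (le_bot_iff.mp h0) (by simp)
  have htop : sInf S ≠ ⊤ := hfin
  set ν₀ : ℝ := (sInf S).toReal with hν₀
  have hcoe : (ν₀ : EReal) = sInf S := EReal.coe_toReal htop hbot
  -- approximation: for every ε > 0 there is ν ≤ ν₀ + ε in S
  have happrox : ∀ ε : ℝ, 0 < ε → ∃ ν : ℝ, IsGeodesicWithDefect X ν ∧ ν ≤ ν₀ + ε := by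
    intro ε hε
    have hlt : sInf S < ((ν₀ + ε : ℝ) : EReal) := by
      rw [← hcoe]
      exact_mod_cast lt_add_of_pos_right ν₀ hε
    have hne : S.Nonempty := by
      by_contra h
      rw [Set.not_nonempty_iff_eq_empty] at h
      exact htop (by simp [h])
    obtain ⟨n, hnS, hn⟩ := exists_lt_of_csInf_lt hne hlt
    obtain ⟨ν, hν0, hgeo, rfl⟩ := hnS
    exact ⟨ν, hgeo, le_of_lt (by exact_mod_cast hn)⟩
  intro x y r s hr hs hrs
  -- choose approximating points
  have hseq : ∀ n : ℕ, ∃ z : X,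
      dist x z ≤ r + ν₀ + 1 / (n + 1) ∧ dist y z ≤ s + ν₀ + 1 / (n + 1) := by
    intro n
    have hpos : (0 : ℝ) < 1 / (n + 1) := by positivity
    obtain ⟨ν, hgeo, hle⟩ := happrox (1 / (n + 1)) hpos
    obtain ⟨z, hz1, hz2⟩ := hgeo x y r s hr hs hrs
    exact ⟨z, by linarith, by linarith⟩
  choose z hz1 hz2 using hseq
  have hmem : ∀ n, z n ∈ Metric.closedBall x (r + ν₀ + 1) := by
    intro n
    rw [Metric.mem_closedBall, dist_comm]
    have : (1 : ℝ) / (n + 1) ≤ 1 := by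
      rw [div_le_one (by positivity)]; linarith [Nat.cast_nonneg (α := ℝ) n]
    linarith [hz1 n]
  obtain ⟨w, _, φ, hφ, hlim⟩ :=
    (isCompact_closedBall x (r + ν₀ + 1)).tendsto_subseq hmem
  refine ⟨w, ?_, ?_⟩
  · have h1 : Filter.Tendsto (fun n => dist x (z (φ n))) Filter.atTop (nhds (dist x w)) :=
      (Continuous.tendsto (continuous_const.dist continuous_id) w).comp hlim
    have h2 : Filter.Tendsto (fun n : ℕ => r + ν₀ + 1 / (φ n + 1)) Filter.atTop
        (nhds (r + ν₀ + 0)) := by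
      exact tendsto_const_nhds.add
        (tendsto_one_div_add_atTop_nhds_zero_nat.comp hφ.tendsto_atTop)
    rw [add_zero] at h2
    exact le_of_tendsto_of_tendsto' h1 h2 fun n => hz1 (φ n)
  · have h1 : Filter.Tendsto (fun n => dist y (z (φ n))) Filter.atTop (nhds (dist y w)) :=
      (Continuous.tendsto (continuous_const.dist continuous_id) w).comp hlim
    have h2 : Filter.Tendsto (fun n : ℕ => s + ν₀ + 1 / (φ n + 1)) Filter.atTop
        (nhds (s + ν₀ + 0)) := by
      exact tendsto_const_nhds.add
        (tendsto_one_div_add_atTop_nhds_zero_nat.comp hφ.tendsto_atTop)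
    rw [add_zero] at h2
    exact le_of_tendsto_of_tendsto' h1 h2 fun n => hz2 (φ n)
end

section
/- Let X and Y be metric spaces, let C ⊆ X × Y be a correspondence (surjective onto both factors) with distortion dis(C) ≤ 2s, and suppose X is ν-geodesic. Then Y is (ν+3s)-geodesic. Consequently, |ν(X) − ν(Y)| ≤ 3·d_GH(X,Y). -/
/-- A correspondence between `X` and `Y`: a relation surjective onto both factors. -/
def IsCorrespondence (X Y : Type*) (C : Set (X × Y)) : Prop :=
  (∀ x : X, ∃ y : Y, (x, y) ∈ C) ∧ (∀ y : Y, ∃ x : X, (x, y) ∈ C)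

/-- The distortion of `C` is at most `t`. -/
def DistortionLE {X Y : Type*} [MetricSpace X] [MetricSpace Y]
    (C : Set (X × Y)) (t : ℝ) : Prop :=
  ∀ p ∈ C, ∀ q ∈ C, |dist p.1 q.1 - dist p.2 q.2| ≤ t

/-- The set of `s` such that some correspondence has distortion at most `2s`;
its infimum is the Gromov–Hausdorff distance between `X` and `Y`. -/
def ghSet (X Y : Type*) [MetricSpace X] [MetricSpace Y] : Set ℝ :=
  {s | ∃ C : Set (X × Y), IsCorrespondence X Y C ∧ DistortionLE C (2 * s)}

/-- transfer of geodesicity through a correspondence -/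
lemma transfer {X Y : Type*} [MetricSpace X] [MetricSpace Y] {ν s : ℝ}
    (hs : 0 ≤ s) {C : Set (X × Y)} (hC : IsCorrespondence X Y C)
    (hdis : DistortionLE C (2 * s)) (hX : IsGeodesicWithDefect X ν) :
    IsGeodesicWithDefect Y (ν + 3 * s) := by
  intro y1 y2 r t hr ht hsum
  obtain ⟨x1, hx1⟩ := hC.2 y1
  obtain ⟨x2, hx2⟩ := hC.2 y2
  have hD : |dist x1 x2 - dist y1 y2| ≤ 2 * s := hdis (x1, y1) hx1 (x2, y2) hx2
  set D := dist x1 x2 with hDdef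
  set r' : ℝ := max 0 (D - t - s) with hr'def
  have hr'0 : (0 : ℝ) ≤ r' := le_max_left _ _
  have hr'D : r' ≤ D := max_le dist_nonneg (by linarith)
  obtain ⟨z, hz1, hz2⟩ := hX x1 x2 r' (D - r') hr'0 (by linarith) (by ring)
  obtain ⟨w, hw⟩ := hC.1 z
  have h1 : |dist x1 z - dist y1 w| ≤ 2 * s := hdis (x1, y1) hx1 (z, w) hw
  have h2 : |dist x2 z - dist y2 w| ≤ 2 * s := hdis (x2, y2) hx2 (z, w) hw
  have hDd := abs_le.1 hD
  have h1' := abs_le.1 h1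
  have h2' := abs_le.1 h2
  have hmax := le_max_right (0 : ℝ) (D - t - s)
  have hr'le : r' ≤ r + s := max_le (by linarith) (by linarith [hDd.1])
  refine ⟨w, ?_, ?_⟩
  · have : dist y1 w ≤ dist x1 z + 2 * s := by linarith [h1'.2]
    calc dist y1 w ≤ dist x1 z + 2 * s := this
      _ ≤ (r' + ν) + 2 * s := by linarith
      _ ≤ r + (ν + 3 * s) := by linarith
  · have : dist y2 w ≤ dist x2 z + 2 * s := by linarith [h2'.2]
    calc dist y2 w ≤ dist x2 z + 2 * s := this
      _ ≤ ((D - r') + ν) + 2 * s := by linarith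
      _ ≤ t + (ν + 3 * s) := by linarith

lemma ghSet_nonneg {X Y : Type*} [MetricSpace X] [MetricSpace Y]
    (hXne : Nonempty X) {s' : ℝ} (h : s' ∈ ghSet X Y) : 0 ≤ s' := by
  obtain ⟨C', hC', hd'⟩ := h
  obtain ⟨x⟩ := hXne
  obtain ⟨y, hy⟩ := hC'.1 x
  have := hd' (x, y) hy (x, y) hy
  simp at this
  linarith

lemma ghSet_subset_comm {X Y : Type*} [MetricSpace X] [MetricSpace Y]
    {s' : ℝ} (h : s' ∈ ghSet X Y) : s' ∈ ghSet Y X := by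
  obtain ⟨C', hC', hd'⟩ := h
  refine ⟨{p : Y × X | (p.2, p.1) ∈ C'}, ⟨fun y => ?_, fun x => ?_⟩, ?_⟩
  · obtain ⟨x, hx⟩ := hC'.2 y; exact ⟨x, hx⟩
  · obtain ⟨y, hy⟩ := hC'.1 x; exact ⟨y, hy⟩
  · intro p hp q hq
    have := hd' (p.2, p.1) hp (q.2, q.1) hq
    simpa [abs_sub_comm] using this

lemma ghSet_comm (X Y : Type*) [MetricSpace X] [MetricSpace Y] :
    ghSet Y X = ghSet X Y :=
  Set.eq_of_subset_of_subset (fun _ h => ghSet_subset_comm h)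
    (fun _ h => ghSet_subset_comm h)

lemma defect_le_aux {X Y : Type*} [MetricSpace X] [MetricSpace Y]
    (hXne : Nonempty X) {ν0 s0 : ℝ} (hν0 : 0 ≤ ν0) (hs0 : 0 ≤ s0)
    {C : Set (X × Y)} (hC : IsCorrespondence X Y C) (hd : DistortionLE C (2 * s0))
    (hX0 : IsGeodesicWithDefect X ν0) :
    geodesicDefect Y ≤ geodesicDefect X + ((3 * sInf (ghSet X Y) : ℝ) : EReal) := by
  have hghne : (ghSet X Y).Nonempty := ⟨s0, C, hC, hd⟩
  set g : ℝ := sInf (ghSet X Y) with hgdef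
  -- the Y-set is nonempty and nonnegative, hence geodesicDefect Y is a real number
  have hmemY : ((ν0 + 3 * s0 : ℝ) : EReal) ∈
      {n : EReal | ∃ ν : ℝ, 0 ≤ ν ∧ IsGeodesicWithDefect Y ν ∧ n = (ν : EReal)} :=
    ⟨ν0 + 3 * s0, by linarith, transfer hs0 hC hd hX0, rfl⟩
  have hgYle : geodesicDefect Y ≤ ((ν0 + 3 * s0 : ℝ) : EReal) := sInf_le hmemY
  have hgY0 : ((0 : ℝ) : EReal) ≤ geodesicDefect Y := by
    apply le_sInf
    rintro n ⟨ν', hν', _, rfl⟩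
    exact_mod_cast hν'
  have hne_top : geodesicDefect Y ≠ ⊤ := (lt_of_le_of_lt hgYle (EReal.coe_lt_top _)).ne
  have hne_bot : geodesicDefect Y ≠ ⊥ := (lt_of_lt_of_le (EReal.bot_lt_coe 0) hgY0).ne'
  set b : ℝ := (geodesicDefect Y).toReal with hbdef
  have hb : (b : EReal) = geodesicDefect Y := EReal.coe_toReal hne_top hne_bot
  have hkey : ((b - 3 * g : ℝ) : EReal) ≤ geodesicDefect X := by
    apply le_sInf
    rintro n ⟨ν', hν', hgeo, rfl⟩
    have h3 : (b - ν') / 3 ≤ g := by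
      apply le_csInf hghne
      intro s' hs'
      have hs'0 : 0 ≤ s' := ghSet_nonneg hXne hs'
      obtain ⟨C', hC', hd'⟩ := hs'
      have hmem : ((ν' + 3 * s' : ℝ) : EReal) ∈
          {n : EReal | ∃ ν : ℝ, 0 ≤ ν ∧ IsGeodesicWithDefect Y ν ∧ n = (ν : EReal)} :=
        ⟨ν' + 3 * s', by linarith, transfer hs'0 hC' hd' hgeo, rfl⟩
      have hle : geodesicDefect Y ≤ ((ν' + 3 * s' : ℝ) : EReal) := sInf_le hmem
      rw [← hb] at hle
      have : b ≤ ν' + 3 * s' := EReal.coe_le_coe_iff.1 hle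
      linarith
    have : b - 3 * g ≤ ν' := by linarith
    exact_mod_cast this
  have := add_le_add_left hkey ((3 * g : ℝ) : EReal)
  rw [← EReal.coe_add] at this
  have heq : (b - 3 * g) + 3 * g = b := by ring
  rw [heq, hb] at this
  exact this

lemma defect_empty (X : Type*) [MetricSpace X] (hXe : ¬ Nonempty X) :
    geodesicDefect X = 0 := by
  apply le_antisymm
  · have hmem : ((0 : ℝ) : EReal) ∈
        {n : EReal | ∃ ν : ℝ, 0 ≤ ν ∧ IsGeodesicWithDefect X ν ∧ n = (ν : EReal)} :=
      ⟨0, le_refl 0, fun x => absurd ⟨x⟩ hXe, rfl⟩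
    simpa [geodesicDefect] using sInf_le hmem
  · apply le_sInf
    rintro n ⟨ν', hν', _, rfl⟩
    exact_mod_cast hν'

/-- If `C` is a correspondence with distortion `≤ 2s` and `X` is `ν`-geodesic, then `Y`
is `(ν + 3s)`-geodesic. Consequently `|ν(X) − ν(Y)| ≤ 3 · d_GH(X,Y)`. -/
theorem stmt3 (X Y : Type*) [MetricSpace X] [MetricSpace Y] (ν s : ℝ)
    (hν : 0 ≤ ν) (hs : 0 ≤ s) (C : Set (X × Y)) (hC : IsCorrespondence X Y C)
    (hdis : DistortionLE C (2 * s)) (hX : IsGeodesicWithDefect X ν) :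
    IsGeodesicWithDefect Y (ν + 3 * s) ∧
      geodesicDefect Y ≤ geodesicDefect X + ((3 * sInf (ghSet X Y) : ℝ) : EReal) ∧
      geodesicDefect X ≤ geodesicDefect Y + ((3 * sInf (ghSet X Y) : ℝ) : EReal) := by
  have hgeoY : IsGeodesicWithDefect Y (ν + 3 * s) := transfer hs hC hdis hX
  by_cases hXne : Nonempty X
  · have hYne : Nonempty Y := by
      obtain ⟨x⟩ := hXne
      obtain ⟨y, _⟩ := hC.1 x
      exact ⟨y⟩
    refine ⟨hgeoY, defect_le_aux hXne hν hs hC hdis hX, ?_⟩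
    -- reverse direction via the swapped correspondence
    have hsw : s ∈ ghSet Y X := ghSet_subset_comm ⟨C, hC, hdis⟩
    obtain ⟨C', hC', hd'⟩ := hsw
    have := defect_le_aux hYne (by linarith : (0:ℝ) ≤ ν + 3 * s) hs hC' hd' hgeoY
    rwa [ghSet_comm] at this
  · have hYe : ¬ Nonempty Y := fun ⟨y⟩ => hXne ⟨(hC.2 y).choose⟩
    have hX0 := defect_empty X hXne
    have hY0 := defect_empty Y hYe
    have hgh : ¬ BddBelow (ghSet X Y) := by
      intro ⟨c, hc⟩
      have hall : ∀ t : ℝ, t ∈ ghSet X Y := by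
        intro t
        refine ⟨∅, ⟨fun x => absurd ⟨x⟩ hXne, fun y => absurd ⟨y⟩ hYe⟩, ?_⟩
        intro p hp
        exact absurd hp (Set.notMem_empty p)
      have h1 := hc (hall (c - 1))
      linarith
    have hsInf : sInf (ghSet X Y) = 0 := Real.sInf_of_not_bddBelow hgh
    rw [hX0, hY0, hsInf]
    norm_num
    exact hgeoY
end

section
/- Let X be a ν-geodesic metric space and let 2ν < t < u. Then the map induced by inclusion on first simplicial homology H₁(VR_t(X)) → H₁(VR_u(X)) of Vietoris–Rips complexes is surjective. -/
/-- The simplicial boundary map from 1-chains (ℤ-linear combinations of ordered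
edges) to 0-chains: `∂(x,y) = y − x`. -/
noncomputable def vrBoundary1 (X : Type*) : ((X × X) →₀ ℤ) →ₗ[ℤ] (X →₀ ℤ) :=
  Finsupp.lsum ℤ fun p =>
    (Finsupp.lsingle p.2 : ℤ →ₗ[ℤ] (X →₀ ℤ)) - Finsupp.lsingle p.1

/-- The simplicial boundary map from 2-chains (ℤ-linear combinations of ordered
triangles) to 1-chains: `∂(x,y,z) = (y,z) − (x,z) + (x,y)`. -/
noncomputable def vrBoundary2 (X : Type*) : ((X × X × X) →₀ ℤ) →ₗ[ℤ] ((X × X) →₀ ℤ) :=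
  Finsupp.lsum ℤ fun p =>
    (Finsupp.lsingle (p.2.1, p.2.2) : ℤ →ₗ[ℤ] ((X × X) →₀ ℤ))
      - Finsupp.lsingle (p.1, p.2.2) + Finsupp.lsingle (p.1, p.2.1)

/-- A 1-chain is supported in `VR_t(X)` if all its edges have length `≤ t`. -/
def ChainIn1 {X : Type*} [MetricSpace X] (t : ℝ) (c : (X × X) →₀ ℤ) : Prop :=
  ∀ p ∈ c.support, dist p.1 p.2 ≤ t

/-- A 2-chain is supported in `VR_t(X)` if all its triangles have diameter `≤ t`. -/
def ChainIn2 {X : Type*} [MetricSpace X] (t : ℝ) (b : (X × X × X) →₀ ℤ) : Prop :=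
  ∀ p ∈ b.support, dist p.1 p.2.1 ≤ t ∧ dist p.1 p.2.2 ≤ t ∧ dist p.2.1 p.2.2 ≤ t

noncomputable def midFn {X : Type*} [MetricSpace X] {ν : ℝ}
    (hgeo : IsGeodesicWithDefect X ν) (x y : X) : X :=
  (hgeo x y (dist x y / 2) (dist x y / 2)
    (by positivity) (by positivity) (by ring)).choose

lemma midFn_spec {X : Type*} [MetricSpace X] {ν : ℝ}
    (hgeo : IsGeodesicWithDefect X ν) (x y : X) :
    dist x (midFn hgeo x y) ≤ dist x y / 2 + ν ∧
      dist y (midFn hgeo x y) ≤ dist x y / 2 + ν :=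
  (hgeo x y (dist x y / 2) (dist x y / 2)
    (by positivity) (by positivity) (by ring)).choose_spec

noncomputable def subdiv {X : Type*} [MetricSpace X] {ν : ℝ}
    (hgeo : IsGeodesicWithDefect X ν) : ((X × X) →₀ ℤ) →ₗ[ℤ] ((X × X) →₀ ℤ) :=
  Finsupp.lsum ℤ fun p =>
    (Finsupp.lsingle (p.1, midFn hgeo p.1 p.2) : ℤ →ₗ[ℤ] ((X × X) →₀ ℤ)) +
      Finsupp.lsingle (midFn hgeo p.1 p.2, p.2)

noncomputable def filler {X : Type*} [MetricSpace X] {ν : ℝ}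
    (hgeo : IsGeodesicWithDefect X ν) : ((X × X) →₀ ℤ) →ₗ[ℤ] ((X × X × X) →₀ ℤ) :=
  Finsupp.lsum ℤ fun p => Finsupp.lsingle (p.1, midFn hgeo p.1 p.2, p.2)

lemma vrBoundary1_single {X : Type*} (p : X × X) (n : ℤ) :
    vrBoundary1 X (Finsupp.single p n) =
      Finsupp.single p.2 n - Finsupp.single p.1 n := by
  simp [vrBoundary1]

lemma vrBoundary2_single {X : Type*} (p : X × X × X) (n : ℤ) :
    vrBoundary2 X (Finsupp.single p n) =
      Finsupp.single (p.2.1, p.2.2) n - Finsupp.single (p.1, p.2.2) n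
        + Finsupp.single (p.1, p.2.1) n := by
  simp [vrBoundary2]

lemma subdiv_single {X : Type*} [MetricSpace X] {ν : ℝ}
    (hgeo : IsGeodesicWithDefect X ν) (p : X × X) (n : ℤ) :
    subdiv hgeo (Finsupp.single p n) =
      Finsupp.single (p.1, midFn hgeo p.1 p.2) n
        + Finsupp.single (midFn hgeo p.1 p.2, p.2) n := by
  simp [subdiv]

lemma filler_single {X : Type*} [MetricSpace X] {ν : ℝ}
    (hgeo : IsGeodesicWithDefect X ν) (p : X × X) (n : ℤ) :
    filler hgeo (Finsupp.single p n) =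
      Finsupp.single (p.1, midFn hgeo p.1 p.2, p.2) n := by
  simp [filler]

lemma boundary1_subdiv {X : Type*} [MetricSpace X] {ν : ℝ}
    (hgeo : IsGeodesicWithDefect X ν) (c : (X × X) →₀ ℤ) :
    vrBoundary1 X (subdiv hgeo c) = vrBoundary1 X c := by
  have : (vrBoundary1 X).comp (subdiv hgeo) = vrBoundary1 X := by
    apply Finsupp.lhom_ext
    intro p n
    simp only [LinearMap.comp_apply, subdiv_single, map_add, vrBoundary1_single]
    abel
  exact LinearMap.congr_fun this c

lemma boundary2_filler {X : Type*} [MetricSpace X] {ν : ℝ}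
    (hgeo : IsGeodesicWithDefect X ν) (c : (X × X) →₀ ℤ) :
    vrBoundary2 X (filler hgeo c) = subdiv hgeo c - c := by
  have : (vrBoundary2 X).comp (filler hgeo) = subdiv hgeo - LinearMap.id := by
    apply Finsupp.lhom_ext
    intro p n
    simp only [LinearMap.comp_apply, filler_single, vrBoundary2_single, subdiv_single,
      LinearMap.sub_apply, LinearMap.id_apply]
    abel
  have h := LinearMap.congr_fun this c
  simpa using h

lemma support_subdiv {X : Type*} [MetricSpace X] {ν : ℝ}
    (hgeo : IsGeodesicWithDefect X ν) (c : (X × X) →₀ ℤ) :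
    ∀ q ∈ (subdiv hgeo c).support, ∃ p ∈ c.support,
      q = (p.1, midFn hgeo p.1 p.2) ∨ q = (midFn hgeo p.1 p.2, p.2) := by
  classical
  intro q hq
  have hrep : subdiv hgeo c = c.sum fun p n =>
      Finsupp.single (p.1, midFn hgeo p.1 p.2) n
        + Finsupp.single (midFn hgeo p.1 p.2, p.2) n := by
    simp [subdiv, Finsupp.lsum_apply, Finsupp.sum]
  rw [hrep] at hq
  obtain ⟨p, hp, hq'⟩ := Finset.mem_biUnion.mp (Finsupp.support_sum hq)
  refine ⟨p, hp, ?_⟩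
  have := Finsupp.support_add hq'
  rcases Finset.mem_union.mp this with h | h
  · exact Or.inl (Finset.mem_singleton.mp (Finsupp.support_single_subset h))
  · exact Or.inr (Finset.mem_singleton.mp (Finsupp.support_single_subset h))

lemma support_filler {X : Type*} [MetricSpace X] {ν : ℝ}
    (hgeo : IsGeodesicWithDefect X ν) (c : (X × X) →₀ ℤ) :
    ∀ q ∈ (filler hgeo c).support, ∃ p ∈ c.support,
      q = (p.1, midFn hgeo p.1 p.2, p.2) := by
  classical
  intro q hq
  have hrep : filler hgeo c = c.sum fun p n =>
      Finsupp.single (p.1, midFn hgeo p.1 p.2, p.2) n := by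
    simp [filler, Finsupp.lsum_apply, Finsupp.sum]
  rw [hrep] at hq
  obtain ⟨p, hp, hq'⟩ := Finset.mem_biUnion.mp (Finsupp.support_sum hq)
  exact ⟨p, hp, Finset.mem_singleton.mp (Finsupp.support_single_subset hq')⟩

/-- For a `ν`-geodesic metric space `X` and `2ν < t < u`, the map
`H₁(VR_t(X)) → H₁(VR_u(X))` induced by inclusion is surjective: every 1-cycle of
`VR_u(X)` is homologous in `VR_u(X)` to a 1-cycle of `VR_t(X)`. -/
theorem stmt5 (X : Type*) [MetricSpace X] (ν t u : ℝ)
    (hgeo : IsGeodesicWithDefect X ν) (htν : 2 * ν < t) (htu : t < u)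
    (c : (X × X) →₀ ℤ) (hc : ChainIn1 u c) (hcycle : vrBoundary1 X c = 0) :
    ∃ (c' : (X × X) →₀ ℤ) (b : (X × X × X) →₀ ℤ),
      ChainIn1 t c' ∧ vrBoundary1 X c' = 0 ∧ ChainIn2 u b ∧
        c - c' = vrBoundary2 X b := by
  classical
  -- dispose of the degenerate case ν < 0
  rcases lt_or_ge ν 0 with hν | hν
  · rcases eq_or_ne c 0 with rfl | hc0
    · exact ⟨0, 0, by simp [ChainIn1], by simp, by simp [ChainIn2], by simp⟩
    · obtain ⟨p, hp⟩ := Finsupp.support_nonempty_iff.mpr hc0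
      obtain ⟨z, hz, -⟩ := hgeo p.1 p.1 0 0 le_rfl le_rfl (by simp)
      have : (0:ℝ) ≤ dist p.1 z := dist_nonneg
      linarith
  have hu0 : 0 < u := lt_of_le_of_lt (by linarith) htu
  have hνu : ν ≤ u / 2 := by linarith
  -- the chain of iterated subdivisions
  set cs : ℕ → ((X × X) →₀ ℤ) := fun k => (⇑(subdiv hgeo))^[k] c with hcs
  have hcs0 : cs 0 = c := rfl
  have hcsS : ∀ k, cs (k + 1) = subdiv hgeo (cs k) := fun k =>
    Function.iterate_succ_apply' _ _ _
  -- metric bound on edges of cs k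
  have hbound : ∀ k, ∀ p ∈ (cs k).support,
      dist p.1 p.2 ≤ u / 2 ^ k + 2 * ν ∧ dist p.1 p.2 ≤ u := by
    intro k
    induction k with
    | zero =>
      intro p hp
      have := hc p hp
      exact ⟨by simp only [pow_zero]; linarith, this⟩
    | succ k ih =>
      intro q hq
      rw [hcsS] at hq
      obtain ⟨p, hp, hpq⟩ := support_subdiv hgeo (cs k) q hq
      obtain ⟨h1, h2⟩ := ih p hp
      obtain ⟨hm1, hm2⟩ := midFn_spec hgeo p.1 p.2
      have hd : dist q.1 q.2 ≤ dist p.1 p.2 / 2 + ν := by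
        rcases hpq with rfl | rfl
        · simpa using hm1
        · simpa [dist_comm] using hm2
      constructor
      · have : dist p.1 p.2 / 2 + ν ≤ u / 2 ^ (k + 1) + 2 * ν := by
          rw [pow_succ]
          have : dist p.1 p.2 / 2 ≤ (u / 2 ^ k + 2 * ν) / 2 := by linarith
          calc dist p.1 p.2 / 2 + ν ≤ (u / 2 ^ k + 2 * ν) / 2 + ν := by linarith
            _ = u / (2 ^ k * 2) + 2 * ν := by ring
        linarith
      · linarith
  -- all iterates are cycles
  have hcyc : ∀ k, vrBoundary1 X (cs k) = 0 := by
    intro k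
    induction k with
    | zero => exact hcycle
    | succ k ih => rw [hcsS, boundary1_subdiv]; exact ih
  -- the iterates are homologous to c within VR_u
  have hhom : ∀ k, ∃ b : (X × X × X) →₀ ℤ,
      ChainIn2 u b ∧ c - cs k = vrBoundary2 X b := by
    intro k
    induction k with
    | zero => exact ⟨0, by simp [ChainIn2], by simp [hcs0]⟩
    | succ k ih =>
      obtain ⟨b, hb1, hb2⟩ := ih
      refine ⟨b - filler hgeo (cs k), ?_, ?_⟩
      · intro q hq
        rcases Finset.mem_union.mp (Finsupp.support_sub hq) with h | h
        · exact hb1 q h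
        · obtain ⟨p, hp, rfl⟩ := support_filler hgeo (cs k) q h
          obtain ⟨-, h2⟩ := hbound k p hp
          obtain ⟨hm1, hm2⟩ := midFn_spec hgeo p.1 p.2
          refine ⟨by simp only; linarith, by simpa using h2, ?_⟩
          show dist (midFn hgeo p.1 p.2) p.2 ≤ u
          rw [dist_comm]
          linarith
      · rw [hcsS, map_sub, boundary2_filler]
        rw [show c - subdiv hgeo (cs k) =
          (c - cs k) - (subdiv hgeo (cs k) - cs k) by abel, hb2]
  -- choose the number of subdivision steps
  obtain ⟨n, hn⟩ : ∃ n : ℕ, u / 2 ^ n + 2 * ν ≤ t := by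
    obtain ⟨n, hn⟩ := pow_unbounded_of_one_lt (u / (t - 2 * ν)) (by norm_num : (1:ℝ) < 2)
    refine ⟨n, ?_⟩
    have h2 : (0:ℝ) < 2 ^ n := by positivity
    have htν' : (0:ℝ) < t - 2 * ν := by linarith
    have : u / 2 ^ n < t - 2 * ν := by
      rw [div_lt_iff₀ h2]
      have := (div_lt_iff₀ htν').mp hn
      linarith
    linarith
  obtain ⟨b, hb1, hb2⟩ := hhom n
  refine ⟨cs n, b, ?_, hcyc n, hb1, hb2⟩
  intro p hp
  obtain ⟨h1, -⟩ := hbound n p hp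
  linarith
end

section
/- Let (V,d) be the metric space of vertices of a finite positively-weighted tree T with the path-length metric. Then the geodesic defect of V equals half the maximum edge length: ν(V) = (1/2)·max_{e ∈ E} l(e). -/
open SimpleGraph

lemma key_walk {V : Type*} [MetricSpace V] (G : SimpleGraph V) (l : Sym2 V → ℝ) (M : ℝ)
    (hM : 0 ≤ M) (hle : ∀ e ∈ G.edgeSet, l e ≤ M)
    (hd : ∀ (x y : V) (p : G.Walk x y), p.IsPath → dist x y = (p.edges.map l).sum) :
    ∀ {x y : V} (p : G.Walk x y), p.IsPath → ∀ r s : ℝ, 0 ≤ r → 0 ≤ s →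
      r + s = (p.edges.map l).sum →
      ∃ z : V, dist x z ≤ r + M / 2 ∧ dist y z ≤ s + M / 2 := by
  intro x y p
  induction p with
  | @nil u =>
    intro hp r s hr hs hsum
    simp only [Walk.edges_nil, List.map_nil, List.sum_nil] at hsum
    exact ⟨u, by simp; linarith, by simp; linarith⟩
  | @cons x w y h p ih =>
    intro hp r s hr hs hsum
    have hwM : l s(x, w) ≤ M := hle _ h
    have hxw : dist x w = l s(x, w) := by
      have := hd x w (Path.singleton h).1 (Path.singleton h).2
      simpa [Path.singleton] using this
    have hsum0 : l s(x, w) + (p.edges.map l).sum = r + s := by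
      simpa using hsum.symm
    by_cases hcase : l s(x, w) ≤ r
    · obtain ⟨z, hz1, hz2⟩ := ih hp.of_cons (r - l s(x, w)) s (by linarith) hs (by linarith)
      refine ⟨z, ?_, hz2⟩
      calc dist x z ≤ dist x w + dist w z := dist_triangle ..
        _ ≤ r + M / 2 := by rw [hxw]; linarith
    · push_neg at hcase
      by_cases h2 : r ≤ l s(x, w) / 2
      · refine ⟨x, by simp; linarith, ?_⟩
        have hxy : dist x y = l s(x, w) + (p.edges.map l).sum := by
          rw [hd x y (Walk.cons h p) hp]; simp
        rw [_root_.dist_comm, hxy, hsum0]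
        linarith
      · push_neg at h2
        refine ⟨w, ?_, ?_⟩
        · rw [hxw]; linarith
        · rw [_root_.dist_comm, hd w y p hp.of_cons]; linarith

/-- For the vertex set of a finite positively weighted tree with the path-length
metric, the geodesic defect is half the maximum edge length. -/
theorem stmt9 (V : Type*) [MetricSpace V] [Fintype V] [Nonempty V]
    (G : SimpleGraph V) (l : Sym2 V → ℝ) (hT : G.IsTree)
    (hl : ∀ e ∈ G.edgeSet, 0 < l e)
    (hd : ∀ (x y : V) (p : G.Walk x y), p.IsPath → dist x y = (p.edges.map l).sum) :
    geodesicDefect V = (((1 / 2) * sSup (l '' G.edgeSet) : ℝ) : EReal) := by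
  classical
  set M : ℝ := sSup (l '' G.edgeSet) with hMdef
  have hfin : (l '' G.edgeSet).Finite := (Set.toFinite G.edgeSet).image l
  have hle : ∀ e ∈ G.edgeSet, l e ≤ M :=
    fun e he => le_csSup hfin.bddAbove ⟨e, he, rfl⟩
  have hM : 0 ≤ M := by
    rcases G.edgeSet.eq_empty_or_nonempty with hE | ⟨e, he⟩
    · simp [hMdef, hE, Real.sSup_empty]
    · exact le_trans (hl e he).le (hle e he)
  -- upper bound: defect M/2 works
  have hup : IsGeodesicWithDefect V (M / 2) := by
    intro x y r s hr hs hrs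
    obtain ⟨w⟩ := hT.isConnected.preconnected x y
    have hp := w.toPath.2
    exact key_walk G l M hM hle hd w.toPath.1 hp r s hr hs
      (by rw [hrs, hd x y w.toPath.1 hp])
  -- lower bound
  have hlow : ∀ ν : ℝ, 0 ≤ ν → IsGeodesicWithDefect V ν → M / 2 ≤ ν := by
    intro ν hν0 hνg
    rcases G.edgeSet.eq_empty_or_nonempty with hE | hne
    · have : M = 0 := by simp [hMdef, hE, Real.sSup_empty]
      linarith
    · have hmem : M ∈ l '' G.edgeSet := (hne.image l).csSup_mem hfin
      obtain ⟨e, he, hlE⟩ := hmem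
      induction e using Sym2.ind with
      | _ a b =>
      have hab : G.Adj a b := he
      have hdab : dist a b = M := by
        have := hd a b (Path.singleton hab).1 (Path.singleton hab).2
        simpa [Path.singleton, hlE] using this
      obtain ⟨z, hz1, hz2⟩ := hνg a b (M / 2) (M / 2) (by linarith) (by linarith)
        (by rw [hdab]; ring)
      -- either dist a z ≥ M or dist b z ≥ M
      obtain ⟨w⟩ := hT.isConnected.preconnected b z
      set q : G.Walk b z := w.toPath.1 with hq
      have hqp : q.IsPath := w.toPath.2
      have hkey : M ≤ dist a z ∨ M ≤ dist b z := by
        by_cases ha : a ∈ q.support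
        · right
          have hsplit := q.take_spec ha
          have : dist b z = dist b a + dist a z := by
            rw [hd b z q hqp, hd b a (q.takeUntil a ha) (hqp.takeUntil ha),
              hd a z (q.dropUntil a ha) (hqp.dropUntil ha)]
            have hE : q.edges = (q.takeUntil a ha).edges ++ (q.dropUntil a ha).edges := by
              rw [← Walk.edges_append, hsplit]
            rw [hE, List.map_append, List.sum_append]
          rw [this, _root_.dist_comm b a, hdab]
          have := dist_nonneg (x := a) (y := z)
          linarith
        · left
          have hpath : (Walk.cons hab q).IsPath := hqp.cons ha
          have : dist a z = M + dist b z := by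
            rw [hd a z (Walk.cons hab q) hpath, hd b z q hqp]
            simp [hlE]
          rw [this]
          have := dist_nonneg (x := b) (y := z)
          linarith
      rcases hkey with hk | hk <;> linarith
  -- conclude
  have hhalf : ((1 : ℝ) / 2) * M = M / 2 := by ring
  rw [geodesicDefect, hhalf]
  apply le_antisymm
  · exact sInf_le ⟨M / 2, by linarith, hup, rfl⟩
  · apply le_sInf
    rintro n ⟨ν, hν0, hνg, rfl⟩
    exact_mod_cast hlow ν hν0 hνg
end

section
/- Let (V,d) be a finite tree metric space and let x,y ∈ V be distinct with d(x,y) = r. Then the set B(x,r) ∩ B(y,r) of points within distance r of both x and y has diameter exactly r; moreover any two points a,b ∈ B(x,r) ∩ B(y,r) with d(a,b) = r satisfy a,b ∈ S(x,r) ∪ S(y,r), i.e., each of a,b is at distance exactly r from x or from y. -/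
open SimpleGraph Walk

section helpers

variable {V : Type*} [MetricSpace V] [DecidableEq V] {G : SimpleGraph V} {l : Sym2 V → ℝ}

omit [MetricSpace V] [DecidableEq V] in
lemma myAppendPath {u v w : V} {p : G.Walk u v} {q : G.Walk v w}
    (hp : p.IsPath) (hq : q.IsPath)
    (h : ∀ z, z ∈ p.support → z ∈ q.support → z = v) : (p.append q).IsPath := by
  rw [Walk.isPath_def, Walk.support_append, List.nodup_append]
  refine ⟨hp.support_nodup, ?_, ?_⟩
  · have := hq.support_nodup
    rw [q.support_eq_cons] at this
    exact this.of_cons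
  · intro z hz z' hz' hzz'
    subst hzz'
    have hzq : z ∈ q.support := by
      rw [q.support_eq_cons]; exact List.mem_cons_of_mem _ hz'
    have hzv := h z hz hzq
    subst hzv
    have := hq.support_nodup
    rw [q.support_eq_cons] at this
    exact (List.nodup_cons.mp this).1 hz'

lemma mySplit (hd : ∀ (x y : V) (p : G.Walk x y), p.IsPath → dist x y = (p.edges.map l).sum)
    {u v : V} (p : G.Walk u v) (hp : p.IsPath) (c : V) (hc : c ∈ p.support) :
    dist u c + dist c v = dist u v := by
  have h1 := hd u c (p.takeUntil c hc) (hp.takeUntil hc)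
  have h2 := hd c v (p.dropUntil c hc) (hp.dropUntil hc)
  have h3 := hd u v p hp
  rw [← p.take_spec hc, Walk.edges_append, List.map_append, List.sum_append] at h3
  linarith

omit [MetricSpace V] [DecidableEq V] in
lemma myFirstHit (S : Set V) {a c : V} (q : G.Walk a c) (hq : q.IsPath) (hc : c ∈ S) :
    ∃ (m : V) (w : G.Walk a m), w.IsPath ∧ (∀ z ∈ w.support, z ∈ q.support) ∧
      m ∈ S ∧ ∀ z ∈ w.support, z ∈ S → z = m := by
  induction q with
  | nil => exact ⟨_, Walk.nil, by simp, by simp, hc, by simp⟩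
  | @cons u v c h q ih =>
    by_cases hu : u ∈ S
    · exact ⟨u, Walk.nil, by simp, by simp, hu, by simp⟩
    · obtain ⟨m, w, hw, hsub, hmS, hmin⟩ := ih hq.of_cons hc
      have hu' : u ∉ q.support := ((Walk.cons_isPath_iff h q).mp hq).2
      refine ⟨m, Walk.cons h w, hw.cons fun hx => hu' (hsub u hx), ?_, hmS, ?_⟩
      · intro z hz
        rw [Walk.support_cons, List.mem_cons] at hz ⊢
        exact hz.imp id (hsub z)
      · intro z hz hzS
        rw [Walk.support_cons, List.mem_cons] at hz
        rcases hz with rfl | hz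
        · exact absurd hzS hu
        · exact hmin z hz hzS

lemma myMedian (hd : ∀ (x y : V) (p : G.Walk x y), p.IsPath → dist x y = (p.edges.map l).sum)
    {x y : V} (p : G.Walk x y) (hp : p.IsPath) (a : V) (q : G.Walk a x) (hq : q.IsPath) :
    ∃ m, m ∈ p.support ∧ dist a x = dist a m + dist m x ∧ dist a y = dist a m + dist m y := by
  obtain ⟨m, w, hw, hsub, hmp, hmin⟩ :=
    myFirstHit {z | z ∈ p.support} q hq (p.start_mem_support)
  refine ⟨m, hmp, ?_, ?_⟩
  · have hpath : (w.append (p.takeUntil m hmp).reverse).IsPath := by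
      refine myAppendPath hw (hp.takeUntil hmp).reverse ?_
      intro z hz hz'
      rw [Walk.support_reverse, List.mem_reverse] at hz'
      exact hmin z hz (p.support_takeUntil_subset hmp hz')
    have := hd a x _ hpath
    rw [Walk.edges_append, List.map_append, List.sum_append, Walk.edges_reverse,
      List.map_reverse, List.sum_reverse] at this
    have h4 := hd m x (p.takeUntil m hmp).reverse (hp.takeUntil hmp).reverse
    rw [Walk.edges_reverse, List.map_reverse, List.sum_reverse] at h4
    rw [this, ← hd a m w hw, ← h4]
  · have hpath : (w.append (p.dropUntil m hmp)).IsPath := by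
      refine myAppendPath hw (hp.dropUntil hmp) ?_
      intro z hz hz'
      exact hmin z hz (p.support_dropUntil_subset hmp hz')
    have := hd a y _ hpath
    rw [Walk.edges_append, List.map_append, List.sum_append] at this
    rw [this, ← hd a m w hw, ← hd m y (p.dropUntil m hmp) (hp.dropUntil hmp)]

lemma myCollinear (hd : ∀ (x y : V) (p : G.Walk x y), p.IsPath → dist x y = (p.edges.map l).sum)
    {x y : V} (p : G.Walk x y) (hp : p.IsPath) (ma mb : V)
    (hma : ma ∈ p.support) (hmb : mb ∈ p.support) :
    dist x mb + dist mb ma = dist x ma ∨ dist ma mb + dist mb y = dist ma y := by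
  have hsupp : mb ∈ (p.takeUntil ma hma).support ∨ mb ∈ (p.dropUntil ma hma).support := by
    rw [← p.take_spec hma, Walk.support_append, List.mem_append] at hmb
    exact hmb.imp id List.mem_of_mem_tail
  rcases hsupp with h | h
  · exact Or.inl (mySplit hd _ (hp.takeUntil hma) mb h)
  · exact Or.inr (mySplit hd _ (hp.dropUntil hma) mb h)

end helpers

/-- In a finite tree metric space, for distinct `x, y` with `d(x,y) = r`, the
intersection `B(x,r) ∩ B(y,r)` has diameter exactly `r`, and any two of its points
at distance `r` each lie on the sphere `S(x,r)` or `S(y,r)`. -/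
theorem stmt11 (V : Type*) [MetricSpace V] [Fintype V]
    (G : SimpleGraph V) (l : Sym2 V → ℝ) (hT : G.IsTree)
    (hl : ∀ e ∈ G.edgeSet, 0 < l e)
    (hd : ∀ (x y : V) (p : G.Walk x y), p.IsPath → dist x y = (p.edges.map l).sum)
    (x y : V) (hxy : x ≠ y) (r : ℝ) (hr : dist x y = r) :
    Metric.diam (Metric.closedBall x r ∩ Metric.closedBall y r) = r ∧
      ∀ a ∈ Metric.closedBall x r ∩ Metric.closedBall y r,
        ∀ b ∈ Metric.closedBall x r ∩ Metric.closedBall y r,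
          dist a b = r →
            (dist a x = r ∨ dist a y = r) ∧ (dist b x = r ∨ dist b y = r) := by
  classical
  have hr0 : 0 ≤ r := hr ▸ dist_nonneg
  obtain ⟨p0⟩ := hT.isConnected.preconnected x y
  set p := p0.bypass with hpdef
  have hp : p.IsPath := p0.bypass_isPath
  have key : ∀ a : V, ∃ m, m ∈ p.support ∧ dist a x = dist a m + dist m x ∧
      dist a y = dist a m + dist m y ∧ dist x m + dist m y = r := by
    intro a
    obtain ⟨q0⟩ := hT.isConnected.preconnected a x
    obtain ⟨m, hm, h1, h2⟩ := myMedian hd p hp a q0.bypass q0.bypass_isPath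
    exact ⟨m, hm, h1, h2, by rw [← hr]; exact mySplit hd p hp m hm⟩
  have bound : ∀ a b : V, dist a x ≤ r → dist a y ≤ r → dist b x ≤ r → dist b y ≤ r →
      dist a b ≤ r ∧ (dist a b = r →
        (dist a x = r ∨ dist a y = r) ∧ (dist b x = r ∨ dist b y = r)) := by
    intro a b hax hay hbx hby
    obtain ⟨ma, hma, ha1, ha2, ha3⟩ := key a
    obtain ⟨mb, hmb, hb1, hb2, hb3⟩ := key b
    have tri : dist a b ≤ dist a ma + dist ma mb + dist b mb := by
      calc dist a b ≤ dist a mb + dist mb b := dist_triangle a mb b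
        _ ≤ (dist a ma + dist ma mb) + dist mb b := by
            have := dist_triangle a ma mb; linarith
        _ = dist a ma + dist ma mb + dist b mb := by rw [dist_comm mb b]
    have c1 : dist ma x = dist x ma := dist_comm _ _
    have c2 : dist mb x = dist x mb := dist_comm _ _
    have c3 : dist mb ma = dist ma mb := dist_comm _ _
    have hcol := myCollinear hd p hp ma mb hma hmb
    rcases hcol with h | h
    · -- dist ma mb = dist x ma - dist x mb
      constructor
      · linarith
      · intro hab
        constructor
        · left; linarith
        · right; linarith
    · constructor
      · linarith
      · intro hab
        constructor
        · right; linarith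
        · left; linarith
  refine ⟨?_, ?_⟩
  · apply le_antisymm
    · apply Metric.diam_le_of_forall_dist_le hr0
      rintro a ⟨hax, hay⟩ b ⟨hbx, hby⟩
      exact (bound a b (Metric.mem_closedBall.mp hax) (Metric.mem_closedBall.mp hay)
        (Metric.mem_closedBall.mp hbx) (Metric.mem_closedBall.mp hby)).1
    · have hxmem : x ∈ Metric.closedBall x r ∩ Metric.closedBall y r := by
        constructor
        · simp [hr0]
        · rw [Metric.mem_closedBall]; exact hr.le
      have hymem : y ∈ Metric.closedBall x r ∩ Metric.closedBall y r := by
        constructor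
        · rw [Metric.mem_closedBall]
          have : dist y x = r := by rw [_root_.dist_comm]; exact hr
          exact this.le
        · simp [hr0]
      have := Metric.dist_le_diam_of_mem (Set.toFinite _).isBounded hxmem hymem
      rwa [hr] at this
  · rintro a ⟨hax, hay⟩ b ⟨hbx, hby⟩ hab
    exact (bound a b (Metric.mem_closedBall.mp hax) (Metric.mem_closedBall.mp hay)
      (Metric.mem_closedBall.mp hbx) (Metric.mem_closedBall.mp hby)).2 hab
end

section
/- Let (V,d) be a finite tree metric space, Δ a maximal simplex of diameter r_m in VR_{r_m}(V) containing a non-tree edge e={u,w} of length r_m. Then every vertex x ≠ u,w on the unique tree path from u to w belongs to Δ and is not contained in any non-tree edge of length r_m inside Δ. In particular the set L_Δ of vertices of Δ not contained in any such edge is nonempty. -/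
def VRComplex (X : Type*) [MetricSpace X] (t : ℝ) : Set (Finset X) :=
  {σ | σ.Nonempty ∧ ∀ x ∈ σ, ∀ y ∈ σ, dist x y ≤ t}

/-- In a finite tree metric space, let `Δ` be a maximal simplex of `VR_r(V)`
containing a non-tree edge `e = {u,w}` of length `r`. Then every vertex `x ≠ u, w`
on the unique tree path from `u` to `w` belongs to `Δ` and is not contained in any
non-tree edge of length `r` inside `Δ`; in particular the set `L_Δ` of such
vertices of `Δ` is nonempty. -/
theorem stmt14 (V : Type*) [MetricSpace V] [Fintype V]
    (G : SimpleGraph V) (l : Sym2 V → ℝ) (hT : G.IsTree)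
    (hl : ∀ e ∈ G.edgeSet, 0 < l e)
    (hd : ∀ (x y : V) (p : G.Walk x y), p.IsPath → dist x y = (p.edges.map l).sum)
    (r : ℝ) (Δ : Finset V) (hΔ : Δ ∈ VRComplex V r)
    (hmax : ∀ σ ∈ VRComplex V r, Δ ⊆ σ → σ = Δ)
    (u w : V) (huw : u ≠ w) (huΔ : u ∈ Δ) (hwΔ : w ∈ Δ)
    (hduw : dist u w = r) (he : ¬G.Adj u w) :
    (∀ x : V, x ≠ u → x ≠ w →
        (∃ p : G.Walk u w, p.IsPath ∧ x ∈ p.support) →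
        x ∈ Δ ∧ ∀ z ∈ Δ, z ≠ x → ¬(dist x z = r ∧ ¬G.Adj x z)) ∧
      ∃ x ∈ Δ, ∀ z ∈ Δ, z ≠ x → ¬(dist x z = r ∧ ¬G.Adj x z) := by
  classical
  obtain ⟨hconn, hacyc⟩ := hT
  have hr : 0 < r := hduw ▸ dist_pos.mpr huw
  -- Lemma A: splitting a path at a support vertex splits the distance
  have keyA : ∀ (a b : V) (p : G.Walk a b), p.IsPath → ∀ x ∈ p.support,
      dist a x + dist x b = dist a b := by
    intro a b p hp x hx
    have h1 := hd a x (p.takeUntil x hx) (hp.takeUntil hx)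
    have h2 := hd x b (p.dropUntil x hx) (hp.dropUntil hx)
    have h3 := hd a b p hp
    have he' : p.edges = (p.takeUntil x hx).edges ++ (p.dropUntil x hx).edges := by
      rw [← SimpleGraph.Walk.edges_append, p.take_spec hx]
    rw [h1, h2, h3, he', List.map_append, List.sum_append]
  -- Lemma B: x on the unique path a–b lies on any path z→a or z→b
  have keyB : ∀ (z a b x : V) (p : G.Walk a b) (p1 : G.Walk z a) (p2 : G.Walk z b),
      p.IsPath → x ∈ p.support → x ∈ p1.support ∨ x ∈ p2.support := by
    intro z a b x p p1 p2 hp hx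
    have huniq := hacyc.path_unique (p1.reverse.append p2).toPath ⟨p, hp⟩
    have hsupp : x ∈ (p1.reverse.append p2).support := by
      apply SimpleGraph.Walk.support_bypass_subset
      have hbp : (p1.reverse.append p2).bypass = p := congrArg Subtype.val huniq
      exact hbp ▸ hx
    rw [SimpleGraph.Walk.mem_support_append_iff, SimpleGraph.Walk.support_reverse,
      List.mem_reverse] at hsupp
    exact hsupp
  -- strict bound
  have bound : ∀ x : V, x ≠ u → x ≠ w → (∃ p : G.Walk u w, p.IsPath ∧ x ∈ p.support) →
      ∀ z : V, dist z u ≤ r → dist z w ≤ r → dist x z < r := by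
    rintro x hxu hxw ⟨p, hp, hxp⟩ z hzu hzw
    have hsplit : dist u x + dist x w = r := by
      rw [← hduw]; exact keyA u w p hp x hxp
    have hux : 0 < dist u x := dist_pos.mpr (Ne.symm hxu)
    have hxw' : 0 < dist x w := dist_pos.mpr hxw
    obtain ⟨p1⟩ := hconn.preconnected z u
    obtain ⟨p2⟩ := hconn.preconnected z w
    rcases keyB z u w x p p1.toPath.val p2.toPath.val hp hxp with hm | hm
    · have := keyA z u p1.toPath.val p1.toPath.prop x hm
      have hc : dist x u = dist u x := dist_comm x u
      have hc2 : dist x z = dist z x := dist_comm x z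
      linarith
    · have := keyA z w p2.toPath.val p2.toPath.prop x hm
      have hc2 : dist x z = dist z x := dist_comm x z
      linarith
  -- Part 1
  have part1 : ∀ x : V, x ≠ u → x ≠ w →
      (∃ p : G.Walk u w, p.IsPath ∧ x ∈ p.support) →
      x ∈ Δ ∧ ∀ z ∈ Δ, z ≠ x → ¬(dist x z = r ∧ ¬G.Adj x z) := by
    intro x hxu hxw hxp
    have hb : ∀ z ∈ Δ, dist x z < r := by
      intro z hz
      exact bound x hxu hxw hxp z (hΔ.2 z hz u huΔ) (hΔ.2 z hz w hwΔ)
    have hmem : x ∈ Δ := by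
      have hins : (insert x Δ : Finset V) ∈ VRComplex V r := by
        refine ⟨⟨x, Finset.mem_insert_self x Δ⟩, ?_⟩
        intro a ha b hb2
        rcases Finset.mem_insert.mp ha with ha | ha <;>
          rcases Finset.mem_insert.mp hb2 with hb2 | hb2
        · rw [ha, hb2]; simpa using hr.le
        · rw [ha]; exact (hb _ hb2).le
        · rw [hb2, dist_comm]; exact (hb _ ha).le
        · exact hΔ.2 _ ha _ hb2
      have := hmax _ hins (Finset.subset_insert x Δ)
      rw [← this]; exact Finset.mem_insert_self x Δ
    refine ⟨hmem, ?_⟩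
    rintro z hz _ ⟨h1, _⟩
    exact absurd h1 (ne_of_lt (hb z hz))
  refine ⟨part1, ?_⟩
  -- Part 2: find an interior vertex of the path u→w
  obtain ⟨p0⟩ := hconn.preconnected u w
  obtain ⟨p, hp⟩ := p0.toPath
  cases p with
  | nil => exact absurd rfl huw
  | @cons _ b _ h q =>
    have hbw : b ≠ w := by
      rintro rfl
      exact he h
    have hbu : b ≠ u := h.ne'
    have hbmem : b ∈ (SimpleGraph.Walk.cons h q).support := by
      simp [SimpleGraph.Walk.support_cons]
    obtain ⟨hbΔ, hprop⟩ := part1 b hbu hbw ⟨SimpleGraph.Walk.cons h q, hp, hbmem⟩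
    exact ⟨b, hbΔ, hprop⟩
end

section
/- Let K be a finite simplicial complex and L ⊆ K a subcomplex. If V is a discrete gradient on K (a partition of a subset of K into regular face-poset intervals arising from a discrete Morse function) such that K \ L is exactly the union of the intervals in V, then K collapses simplicially onto L; in particular K and L are homotopy equivalent. -/
/-- An abstract simplicial complex on the vertex type `X`: a collection of nonempty
finite subsets closed under taking nonempty subsets. -/
def IsComplex {X : Type*} (K : Set (Finset X)) : Prop :=
  ∀ σ ∈ K, σ.Nonempty ∧ ∀ ρ : Finset X, ρ.Nonempty → ρ ⊆ σ → ρ ∈ K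

/-- `P` is the interval partition of a discrete Morse function `f` on `K`:
every simplex lies in a unique face-poset interval `[p.1, p.2]` with `p ∈ P`,
`f` is monotonic, and `f σ = f τ` for `σ ⊆ τ` iff `σ, τ` lie in a common
interval. The regular intervals (`p.1 ≠ p.2`) form the discrete gradient of `f`. -/
def IsMorsePartition {X : Type*} (K : Set (Finset X)) (f : Finset X → ℝ)
    (P : Set (Finset X × Finset X)) : Prop :=
  (∀ p ∈ P, p.1 ∈ K ∧ p.2 ∈ K ∧ p.1 ⊆ p.2) ∧
  (∀ σ ∈ K, ∃! p, p ∈ P ∧ p.1 ⊆ σ ∧ σ ⊆ p.2) ∧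
  (∀ σ ∈ K, ∀ τ ∈ K, σ ⊆ τ → f σ ≤ f τ) ∧
  (∀ σ ∈ K, ∀ τ ∈ K, σ ⊆ τ → (f σ = f τ ↔ ∃ p ∈ P, p.1 ⊆ σ ∧ τ ⊆ p.2))

/-- An elementary collapse removes a free pair `(σ, τ)`: `σ` is a facet of `τ` and
`τ` is the unique proper coface of `σ`. -/
def ElemCollapse {X : Type*} (K L : Set (Finset X)) : Prop :=
  ∃ σ τ : Finset X, σ ∈ K ∧ τ ∈ K ∧ σ ⊂ τ ∧ σ.card + 1 = τ.card ∧
    (∀ ρ ∈ K, σ ⊂ ρ → ρ = τ) ∧ L = K \ {σ, τ}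

/-- A collapse is a finite sequence of elementary collapses. -/
def Collapses {X : Type*} (K L : Set (Finset X)) : Prop :=
  Relation.ReflTransGen ElemCollapse K L

lemma collapse_interval {X : Type*} (K : Set (Finset X)) (ρ φ : Finset X)
    (hρφ : ρ ⊆ φ) (hne : ρ ≠ φ)
    (hsub : ∀ σ : Finset X, ρ ⊆ σ → σ ⊆ φ → σ ∈ K)
    (hcof : ∀ σ ψ : Finset X, ρ ⊆ σ → σ ⊆ φ → ψ ∈ K → σ ⊆ ψ → ψ ⊆ φ) :
    Collapses K (K \ {σ : Finset X | ρ ⊆ σ ∧ σ ⊆ φ}) := by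
  classical
  obtain ⟨v, hvφ, hvρ⟩ := Finset.exists_of_ssubset (lt_of_le_of_ne hρφ hne)
  set S : Finset (Finset X) := (φ.erase v).powerset.filter (fun σ => ρ ⊆ σ) with hSdef
  have hSmem : ∀ σ : Finset X, σ ∈ S ↔ ρ ⊆ σ ∧ σ ⊆ φ.erase v := by
    intro σ; simp [hSdef, and_comm]
  set rem : Finset (Finset X) → Set (Finset X) :=
    fun T => {ψ | ∃ σ ∈ T, ψ = σ ∨ ψ = insert v σ} with hremdef
  have hremS : rem S = {σ : Finset X | ρ ⊆ σ ∧ σ ⊆ φ} := by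
    ext ψ
    constructor
    · rintro ⟨σ, hσ, rfl | rfl⟩
      · rw [hSmem] at hσ
        exact ⟨hσ.1, hσ.2.trans (Finset.erase_subset _ _)⟩
      · rw [hSmem] at hσ
        exact ⟨hσ.1.trans (Finset.subset_insert _ _),
          Finset.insert_subset hvφ (hσ.2.trans (Finset.erase_subset _ _))⟩
    · rintro ⟨h1, h2⟩
      by_cases hv : v ∈ ψ
      · refine ⟨ψ.erase v, ?_, Or.inr (Finset.insert_erase hv).symm⟩
        rw [hSmem]
        exact ⟨Finset.subset_erase.2 ⟨h1, hvρ⟩, Finset.erase_subset_erase _ h2⟩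
      · exact ⟨ψ, (hSmem ψ).2 ⟨h1, Finset.subset_erase.2 ⟨h2, hv⟩⟩, Or.inl rfl⟩
  have key : ∀ R : Finset (Finset X), R ⊆ S →
      (∀ τ ∈ R, ∀ τ' ∈ S, τ' ⊆ τ → τ' ∈ R) →
      Collapses (K \ rem (S \ R)) (K \ rem S) := by
    intro R
    induction R using Finset.strongInduction with
    | _ R ih =>
      intro hRS hdc
      rcases R.eq_empty_or_nonempty with rfl | hRne
      · simp only [Finset.sdiff_empty]
        exact Relation.ReflTransGen.refl
      obtain ⟨σ, hσR, hmax⟩ := Finset.exists_max_image R Finset.card hRne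
      have hσS := hRS hσR
      obtain ⟨hρσ, hσφ'⟩ := (hSmem σ).1 hσS
      have hσφ : σ ⊆ φ := hσφ'.trans (Finset.erase_subset _ _)
      have hvσ : v ∉ σ := fun h => (Finset.mem_erase.1 (hσφ' h)).1 rfl
      have hσK : σ ∈ K := hsub σ hρσ hσφ
      have hτK : insert v σ ∈ K := hsub _ (hρσ.trans (Finset.subset_insert _ _))
        (Finset.insert_subset hvφ hσφ)
      have hnotrem : ∀ ψ : Finset X, (ψ = σ ∨ ψ = insert v σ) → ψ ∉ rem (S \ R) := by
        rintro ψ h ⟨σ', hσ', h'⟩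
        rw [Finset.mem_sdiff] at hσ'
        have hvσ' : v ∉ σ' := fun hc => (Finset.mem_erase.1 (((hSmem σ').1 hσ'.1).2 hc)).1 rfl
        rcases h with rfl | rfl <;> rcases h' with h' | h'
        · exact hσ'.2 (h' ▸ hσR)
        · exact hvσ (h' ▸ Finset.mem_insert_self v σ')
        · exact hvσ' (h'.symm ▸ Finset.mem_insert_self v σ)
        · have : σ = σ' := by
            have := congrArg (fun s => Finset.erase s v) h'
            simpa [Finset.erase_insert hvσ, Finset.erase_insert hvσ'] using this
          exact hσ'.2 (this ▸ hσR)
      have hSR' : S \ R.erase σ = insert σ (S \ R) := by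
        ext x
        simp only [Finset.mem_sdiff, Finset.mem_erase, Finset.mem_insert, not_and]
        constructor
        · rintro ⟨hxS, hx⟩
          by_cases hxσ : x = σ
          · exact Or.inl hxσ
          · exact Or.inr ⟨hxS, fun hxR => (hx hxσ hxR).elim⟩
        · rintro (rfl | ⟨hxS, hxR⟩)
          · exact ⟨hσS, fun h _ => h rfl⟩
          · exact ⟨hxS, fun _ h => hxR h⟩
      have hremins : rem (S \ R.erase σ) = rem (S \ R) ∪ {σ, insert v σ} := by
        rw [hSR']
        ext ψ
        simp only [hremdef, Set.mem_setOf_eq, Finset.mem_insert, Set.mem_union,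
          Set.mem_insert_iff, Set.mem_singleton_iff]
        constructor
        · rintro ⟨σ', (rfl | hσ'), h'⟩
          · exact Or.inr (by tauto)
          · exact Or.inl ⟨σ', hσ', h'⟩
        · rintro (⟨σ', hσ', h'⟩ | h)
          · exact ⟨σ', Or.inr hσ', h'⟩
          · exact ⟨σ, Or.inl rfl, h⟩
      have hstep : ElemCollapse (K \ rem (S \ R)) (K \ rem (S \ R.erase σ)) := by
        refine ⟨σ, insert v σ, ⟨hσK, hnotrem _ (Or.inl rfl)⟩,
          ⟨hτK, hnotrem _ (Or.inr rfl)⟩, Finset.ssubset_insert hvσ,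
          (Finset.card_insert_of_notMem hvσ).symm, ?_, ?_⟩
        · rintro ψ ⟨hψK, hψrem⟩ hσψ
          have hψφ : ψ ⊆ φ := hcof σ ψ hρσ hσφ hψK hσψ.subset
          have hρψ : ρ ⊆ ψ := hρσ.trans hσψ.subset
          by_cases hv : v ∈ ψ
          · have hψ'S : ψ.erase v ∈ S := (hSmem _).2
              ⟨Finset.subset_erase.2 ⟨hρψ, hvρ⟩, Finset.erase_subset_erase _ hψφ⟩
            have hσψ' : σ ⊆ ψ.erase v := Finset.subset_erase.2 ⟨hσψ.subset, hvσ⟩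
            by_cases heq : ψ.erase v = σ
            · rw [← Finset.insert_erase hv, heq]
            · exfalso
              have hnR : ψ.erase v ∉ R := by
                intro hc
                have h1 := hmax _ hc
                have h2 : σ.card < (ψ.erase v).card :=
                  Finset.card_lt_card (lt_of_le_of_ne hσψ' (Ne.symm heq))
                omega
              exact hψrem ⟨ψ.erase v, Finset.mem_sdiff.2 ⟨hψ'S, hnR⟩,
                Or.inr (Finset.insert_erase hv).symm⟩
          · have hψS : ψ ∈ S := (hSmem _).2 ⟨hρψ, Finset.subset_erase.2 ⟨hψφ, hv⟩⟩
            have hnR : ψ ∉ R := by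
              intro hc
              have h1 := hmax _ hc
              have h2 := Finset.card_lt_card hσψ
              omega
            exact absurd ⟨ψ, Finset.mem_sdiff.2 ⟨hψS, hnR⟩, Or.inl rfl⟩ hψrem
        · rw [hremins, ← Set.diff_diff]
      have hdc' : ∀ τ ∈ R.erase σ, ∀ τ' ∈ S, τ' ⊆ τ → τ' ∈ R.erase σ := by
        intro τ hτ τ' hτ'S hττ'
        obtain ⟨hτσ, hτR⟩ := Finset.mem_erase.1 hτ
        refine Finset.mem_erase.2 ⟨?_, hdc τ hτR τ' hτ'S hττ'⟩
        rintro rfl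
        exact hτσ (Finset.eq_of_subset_of_card_le hττ' (hmax _ hτR)).symm
      have hrest := ih (R.erase σ) (Finset.erase_ssubset hσR)
        ((Finset.erase_subset _ _).trans hRS) hdc'
      exact Relation.ReflTransGen.head hstep hrest
  have := key S Finset.Subset.rfl (fun τ _ τ' hτ' _ => hτ')
  rw [Finset.sdiff_self] at this
  have hrem0 : rem ∅ = ∅ := by
    ext ψ; simp [hremdef]
  rw [hrem0, Set.diff_empty, hremS] at this
  exact this

lemma main_aux {X : Type*} [Fintype X] (L : Set (Finset X)) (hL : IsComplex L)
    (f : Finset X → ℝ) :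
    ∀ (n : ℕ) (K : Set (Finset X)) (P : Set (Finset X × Finset X)),
      (K \ L).ncard ≤ n → IsComplex K → L ⊆ K → IsMorsePartition K f P →
      (∀ σ ∈ K, (σ ∉ L ↔ ∃ p ∈ P, p.1 ≠ p.2 ∧ p.1 ⊆ σ ∧ σ ⊆ p.2)) →
      Collapses K L := by
  intro n
  induction n with
  | zero =>
    intro K P hcard hK hLK hP hcompl
    have hempty : K \ L = ∅ := by
      rw [← Set.ncard_eq_zero (Set.toFinite _)]
      omega
    have : K = L := (Set.diff_eq_empty.1 hempty).antisymm hLK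
    rw [this]; exact Relation.ReflTransGen.refl
  | succ n ih =>
    intro K P hcard hK hLK hP hcompl
    obtain ⟨hP1, hP2, hP3, hP4⟩ := hP
    by_cases hKL : K ⊆ L
    · rw [hKL.antisymm hLK]; exact Relation.ReflTransGen.refl
    have hex : ∃ p, p ∈ P ∧ p.1 ≠ p.2 := by
      rw [Set.not_subset] at hKL
      obtain ⟨σ0, hσ0K, hσ0L⟩ := hKL
      obtain ⟨p, hp, hpr, _, _⟩ := (hcompl σ0 hσ0K).1 hσ0L
      exact ⟨p, hp, hpr⟩
    obtain ⟨p, hpPreg, hpmax⟩ := Set.exists_max_image {q ∈ P | q.1 ≠ q.2}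
      (fun q => f q.2) (Set.toFinite _) ⟨hex.choose, hex.choose_spec⟩
    obtain ⟨hpP, hpreg⟩ := hpPreg
    obtain ⟨hp1K, hp2K, hp12⟩ := hP1 p hpP
    have hρne : p.1.Nonempty := (hK _ hp1K).1
    -- interval members are in K
    have hint : ∀ σ : Finset X, p.1 ⊆ σ → σ ⊆ p.2 → σ ∈ K := by
      intro σ h1 h2
      exact (hK p.2 hp2K).2 σ ⟨hρne.choose, h1 hρne.choose_spec⟩ h2
    -- f is constant on intervals (equals value at top)
    have fconst : ∀ σ ∈ K, ∀ q ∈ P, q.1 ⊆ σ → σ ⊆ q.2 → f σ = f q.2 := by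
      intro σ hσ q hq h1 h2
      exact (hP4 σ hσ q.2 (hP1 q hq).2.1 h2).2 ⟨q, hq, h1, Finset.Subset.rfl⟩
    -- interval of p is disjoint from L
    have hnotL : ∀ σ : Finset X, p.1 ⊆ σ → σ ⊆ p.2 → σ ∉ L := by
      intro σ h1 h2
      exact (hcompl σ (hint σ h1 h2)).2 ⟨p, hpP, hpreg, h1, h2⟩
    -- cofaces of interval members stay in the interval
    have hcof : ∀ σ ψ : Finset X, p.1 ⊆ σ → σ ⊆ p.2 → ψ ∈ K → σ ⊆ ψ →
        p.1 ⊆ ψ ∧ ψ ⊆ p.2 := by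
      intro σ ψ h1 h2 hψK hσψ
      have hσK : σ ∈ K := hint σ h1 h2
      have hψL : ψ ∉ L := by
        intro hc
        exact hnotL σ h1 h2 ((hL ψ hc).2 σ ⟨hρne.choose, h1 hρne.choose_spec⟩ hσψ)
      obtain ⟨q, hqP, hqreg, hq1, hq2⟩ := (hcompl ψ hψK).1 hψL
      have h3 : f σ = f ψ := by
        have e1 : f σ = f p.2 := fconst σ hσK p hpP h1 h2
        have e2 : f ψ = f q.2 := fconst ψ hψK q hqP hq1 hq2
        have e3 : f q.2 ≤ f p.2 := hpmax q ⟨hqP, hqreg⟩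
        have e4 : f σ ≤ f ψ := hP3 σ hσK ψ hψK hσψ
        linarith
      obtain ⟨r, hrP, hr1, hr2⟩ := (hP4 σ hσK ψ hψK hσψ).1 h3
      have hrp : r = p := by
        obtain ⟨u, -, hu⟩ := hP2 σ hσK
        rw [hu r ⟨hrP, hr1, hσψ.trans hr2⟩, hu p ⟨hpP, h1, h2⟩]
      rw [hrp] at hr1 hr2
      exact ⟨h1.trans hσψ, hr2⟩
    set I : Set (Finset X) := {σ : Finset X | p.1 ⊆ σ ∧ σ ⊆ p.2} with hIdef
    have hIK : I ⊆ K := fun σ hσ => hint σ hσ.1 hσ.2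
    have hInotL : ∀ σ ∈ I, σ ∉ L := fun σ hσ => hnotL σ hσ.1 hσ.2
    -- the unique interval of a member of I is p
    have hIuniq : ∀ σ ∈ I, ∀ r, r ∈ P ∧ r.1 ⊆ σ ∧ σ ⊆ r.2 → r = p := by
      intro σ hσ r hr
      obtain ⟨u, -, hu⟩ := hP2 σ (hIK hσ)
      rw [hu r hr, hu p ⟨hpP, hσ.1, hσ.2⟩]
    -- step 1 : collapse the interval
    have step1 : Collapses K (K \ I) :=
      collapse_interval K p.1 p.2 hp12 hpreg hint
        (fun σ ψ h1 h2 hψ hsub => (hcof σ ψ h1 h2 hψ hsub).2)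
    -- K' properties
    have hK' : IsComplex (K \ I) := by
      intro σ ⟨hσK, hσI⟩
      refine ⟨(hK σ hσK).1, fun τ hτne hτσ => ⟨(hK σ hσK).2 τ hτne hτσ, fun hτI => ?_⟩⟩
      exact hσI ⟨(hcof τ σ hτI.1 hτI.2 hσK hτσ).1, (hcof τ σ hτI.1 hτI.2 hσK hτσ).2⟩
    have hLK' : L ⊆ K \ I := fun σ hσ => ⟨hLK hσ, fun hc => hInotL σ hc hσ⟩
    have hMP' : IsMorsePartition (K \ I) f (P \ {p}) := by
      refine ⟨?_, ?_, ?_, ?_⟩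
      · rintro q ⟨hqP, hqp⟩
        obtain ⟨hq1, hq2, hq12⟩ := hP1 q hqP
        refine ⟨⟨hq1, fun hc => hqp (hIuniq q.1 hc q ⟨hqP, Finset.Subset.rfl, hq12⟩)⟩,
          ⟨hq2, fun hc => hqp (hIuniq q.2 hc q ⟨hqP, hq12, Finset.Subset.rfl⟩)⟩, hq12⟩
      · rintro σ ⟨hσK, hσI⟩
        obtain ⟨q, ⟨hqP, hq1, hq2⟩, hu⟩ := hP2 σ hσK
        refine ⟨q, ⟨⟨hqP, fun hc => ?_⟩, hq1, hq2⟩, fun r ⟨⟨hrP, _⟩, hr1, hr2⟩ =>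
          hu r ⟨hrP, hr1, hr2⟩⟩
        rw [Set.mem_singleton_iff] at hc
        rw [hc] at hq1 hq2
        exact hσI ⟨hq1, hq2⟩
      · rintro σ ⟨hσK, -⟩ τ ⟨hτK, -⟩ hστ
        exact hP3 σ hσK τ hτK hστ
      · rintro σ ⟨hσK, hσI⟩ τ ⟨hτK, -⟩ hστ
        rw [hP4 σ hσK τ hτK hστ]
        constructor
        · rintro ⟨q, hqP, hq1, hq2⟩
          refine ⟨q, ⟨hqP, fun hc => ?_⟩, hq1, hq2⟩
          rw [Set.mem_singleton_iff] at hc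
          rw [hc] at hq1 hq2
          exact hσI ⟨hq1, hστ.trans hq2⟩
        · rintro ⟨q, ⟨hqP, -⟩, hq1, hq2⟩
          exact ⟨q, hqP, hq1, hq2⟩
    have hcompl' : ∀ σ ∈ K \ I,
        (σ ∉ L ↔ ∃ q ∈ P \ {p}, q.1 ≠ q.2 ∧ q.1 ⊆ σ ∧ σ ⊆ q.2) := by
      rintro σ ⟨hσK, hσI⟩
      rw [hcompl σ hσK]
      constructor
      · rintro ⟨q, hqP, hqreg, hq1, hq2⟩
        refine ⟨q, ⟨hqP, fun hc => ?_⟩, hqreg, hq1, hq2⟩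
        rw [Set.mem_singleton_iff] at hc
        rw [hc] at hq1 hq2
        exact hσI ⟨hq1, hq2⟩
      · rintro ⟨q, ⟨hqP, -⟩, hqreg, hq1, hq2⟩
        exact ⟨q, hqP, hqreg, hq1, hq2⟩
    have hcard' : ((K \ I) \ L).ncard ≤ n := by
      have hss : (K \ I) \ L ⊂ K \ L := by
        constructor
        · rintro σ ⟨⟨hσK, -⟩, hσL⟩; exact ⟨hσK, hσL⟩
        · intro hsub
          have hp1I : p.1 ∈ I := ⟨Finset.Subset.rfl, hp12⟩
          have := hsub ⟨hp1K, hInotL p.1 hp1I⟩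
          exact this.1.2 hp1I
      have := Set.ncard_lt_ncard hss (Set.toFinite _)
      omega
    exact step1.trans (ih (K \ I) (P \ {p}) hcard' hK' hLK' hMP' hcompl')


/-- Discrete Morse collapsing theorem: if `K` is a finite simplicial complex,
`L ⊆ K` a subcomplex, and the complement `K \ L` is exactly the union of the
regular intervals of a discrete gradient on `K`, then `K` collapses onto `L`. -/
theorem stmt16 (X : Type*) [Fintype X] (K L : Set (Finset X))
    (hK : IsComplex K) (hLK : L ⊆ K) (hL : IsComplex L)
    (f : Finset X → ℝ) (P : Set (Finset X × Finset X))
    (hP : IsMorsePartition K f P)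
    (hcompl : ∀ σ ∈ K, (σ ∉ L ↔ ∃ p ∈ P, p.1 ≠ p.2 ∧ p.1 ⊆ σ ∧ σ ⊆ p.2)) :
    Collapses K L :=
  main_aux L hL f (K \ L).ncard K P le_rfl hK hLK hP hcompl
end

section
/- Let f: K → ℝ be a discrete Morse function on a finite simplicial complex with totally ordered vertices, with discrete gradient V. Define the refinement Ṽ = {(ψ∖{v}, ψ∪{v}) : ψ ∈ [ρ,φ] ∈ V, v = min(φ∖ρ)}. Then the zero persistence apparent pairs of the f-lexicographic order on K are precisely the pairs of Ṽ. -/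
/-- The lexicographic order on simplices induced by a total vertex order. -/
def LexLT {X : Type*} [LinearOrder X] (σ τ : Finset X) : Prop :=
  List.Lex (· < ·) (σ.sort (· ≤ ·)) (τ.sort (· ≤ ·))

/-- The `f`-lexicographic order: first by `f`-value, then by dimension, then
lexicographically. -/
def FlexLT {X : Type*} [LinearOrder X] (f : Finset X → ℝ) (σ τ : Finset X) : Prop :=
  f σ < f τ ∨ (f σ = f τ ∧ (σ.card < τ.card ∨ (σ.card = τ.card ∧ LexLT σ τ)))

/-- `(σ, τ)` is an apparent pair with respect to the `f`-lexicographic order: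
`σ` is the maximal facet of `τ` and `τ` is the minimal cofacet of `σ`. -/
def ApparentPair {X : Type*} [LinearOrder X] (K : Set (Finset X))
    (f : Finset X → ℝ) (σ τ : Finset X) : Prop :=
  σ ∈ K ∧ τ ∈ K ∧ σ ⊆ τ ∧ σ.card + 1 = τ.card ∧
    (∀ σ' ∈ K, σ' ⊆ τ → σ'.card + 1 = τ.card → σ' ≠ σ → FlexLT f σ' σ) ∧
    (∀ τ' ∈ K, σ ⊆ τ' → σ.card + 1 = τ'.card → τ' ≠ τ → FlexLT f τ τ')

/-- `(σ, τ)` is a pair of the minimal vertex refinement `Ṽ` of the gradient: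
`σ = ψ \ {v}` and `τ = ψ ∪ {v}` for some `ψ` in a regular interval `[ρ, φ] ∈ V`
with `v = min (φ \ ρ)`. -/
def TildePair {X : Type*} [LinearOrder X] (P : Set (Finset X × Finset X))
    (σ τ : Finset X) : Prop :=
  ∃ p ∈ P, p.1 ≠ p.2 ∧ ∃ ψ v, p.1 ⊆ ψ ∧ ψ ⊆ p.2 ∧
    v ∈ p.2 \ p.1 ∧ (∀ u ∈ p.2 \ p.1, v ≤ u) ∧ σ = ψ \ {v} ∧ τ = ψ ∪ {v}

lemma lex_sorted_aux {X : Type*} [LinearOrder X] :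
    ∀ (l₁ l₂ : List X), l₁.Pairwise (· < ·) → l₂.Pairwise (· < ·) →
      l₁.length = l₂.length → ∀ a : X, a ∈ l₁ → a ∉ l₂ →
      (∀ b ∈ l₂, b ∉ l₁ → a < b) → List.Lex (· < ·) l₁ l₂ := by
  intro l₁
  induction l₁ with
  | nil => intro l₂ _ _ _ a ha _ _; exact absurd ha List.not_mem_nil
  | cons x xs ih =>
    intro l₂ h₁ h₂ hlen a ha ha₂ hmin
    cases l₂ with
    | nil => simp at hlen
    | cons y ys =>
      rcases List.pairwise_cons.1 h₁ with ⟨hx, hxs⟩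
      rcases List.pairwise_cons.1 h₂ with ⟨hy, hys⟩
      by_cases hxy : x = y
      · subst hxy
        apply List.Lex.cons
        have hax : a ≠ x := fun h => ha₂ (h ▸ (List.mem_cons_self (a := x) (l := ys)))
        have ha' : a ∈ xs := (List.mem_cons.1 ha).resolve_left hax
        refine ih ys hxs hys (by simpa using hlen) a ha'
          (fun h => ha₂ (List.mem_cons_of_mem _ h)) ?_
        intro b hb hbxs
        have hbx : b ≠ x := fun h => absurd (hy b hb) (by simp [h])
        exact hmin b (List.mem_cons_of_mem _ hb) (by simp [hbx, hbxs])
      · have hxltY : x < y := by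
          by_cases hyx : y ∈ xs
          · exact hx y hyx
          · have hyl : y ∉ x :: xs := by
              simp only [List.mem_cons, not_or]
              exact ⟨fun h => hxy h.symm, hyx⟩
            have hay : a < y := hmin y (List.mem_cons_self (a := y) (l := ys)) hyl
            have hxa : x ≤ a := by
              rcases List.mem_cons.1 ha with h | h
              · exact le_of_eq h.symm
              · exact le_of_lt (hx a h)
            exact lt_of_le_of_lt hxa hay
        exact List.Lex.rel hxltY

lemma lexLT_of_min {X : Type*} [LinearOrder X] {A B : Finset X} (hcard : A.card = B.card)
    {a : X} (haA : a ∈ A) (haB : a ∉ B) (hmin : ∀ b ∈ B, b ∉ A → a < b) : LexLT A B := by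
  refine lex_sorted_aux _ _ (A.sortedLT_sort.pairwise) (B.sortedLT_sort.pairwise)
    (by simp [Finset.length_sort, hcard]) a (by simpa using haA) (by simpa using haB) ?_
  intro b hb hbA
  exact hmin b (by simpa using hb) (by simpa using hbA)

lemma lexLT_asymm {X : Type*} [LinearOrder X] {A B : Finset X}
    (h1 : LexLT A B) (h2 : LexLT B A) : False :=
  _root_.asymm (r := List.Lex ((· < ·) : X → X → Prop)) h1 h2

lemma cofacet_eq {X : Type*} [DecidableEq X] {σ τ : Finset X} (h : σ ⊆ τ)
    (hc : σ.card + 1 = τ.card) : ∃ u, u ∉ σ ∧ τ = insert u σ := by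
  have h1 : (τ \ σ).card = 1 := by
    rw [Finset.card_sdiff_of_subset h]; omega
  obtain ⟨u, hu⟩ := Finset.card_eq_one.1 h1
  refine ⟨u, ?_, ?_⟩
  · have : u ∈ τ \ σ := hu ▸ Finset.mem_singleton_self u
    exact (Finset.mem_sdiff.1 this).2
  · have h2 := Finset.union_sdiff_of_subset h
    rw [hu] at h2
    rw [← h2, Finset.union_comm, Finset.insert_eq, Finset.union_comm]

/-- The zero persistence apparent pairs of the `f`-lexicographic order are exactly
the pairs of the minimal vertex refinement `Ṽ` of the discrete gradient of `f`. -/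
theorem stmt18 (X : Type*) [LinearOrder X] [Fintype X] (K : Set (Finset X))
    (hK : IsComplex K) (f : Finset X → ℝ) (P : Set (Finset X × Finset X))
    (hP : IsMorsePartition K f P) :
    ∀ σ τ : Finset X,
      (ApparentPair K f σ τ ∧ f σ = f τ) ↔ TildePair P σ τ := by
  obtain ⟨hP1, hP2, hMono, hEq⟩ := hP
  intro σ τ
  constructor
  · -- Apparent pair with zero persistence → tilde pair
    rintro ⟨⟨hσK, hτK, hστ, hcard, hmax, hmin⟩, hff⟩
    obtain ⟨p, hp, hρσ, hτφ⟩ := (hEq σ hσK τ hτK hστ).1 hff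
    obtain ⟨hρK, hφK, hρφ⟩ := hP1 p hp
    obtain ⟨w, hwσ, hτeq⟩ := cofacet_eq hστ hcard
    have hwτ : w ∈ τ := hτeq ▸ Finset.mem_insert_self w σ
    have hwd : w ∈ p.2 \ p.1 :=
      Finset.mem_sdiff.2 ⟨hτφ hwτ, fun h => hwσ (hρσ h)⟩
    have hne : (p.2 \ p.1).Nonempty := ⟨w, hwd⟩
    obtain ⟨v, hvd, hvmin⟩ : ∃ v ∈ p.2 \ p.1, ∀ u ∈ p.2 \ p.1, v ≤ u :=
      ⟨(p.2 \ p.1).min' hne, Finset.min'_mem _ hne, fun u hu => Finset.min'_le _ u hu⟩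
    obtain ⟨hvφ, hvρ⟩ := Finset.mem_sdiff.1 hvd
    have hστφ : σ ⊆ p.2 := hστ.trans hτφ
    have hρτ : p.1 ⊆ τ := hρσ.trans hστ
    -- the unique element of τ \ σ must be the minimal vertex v
    have hwv : w = v := by
      by_contra hwvne
      have hvw : v < w := lt_of_le_of_ne (hvmin w hwd) (fun h => hwvne h.symm)
      by_cases hvσ : v ∈ σ
      · -- then τ.erase v would be a facet of τ larger than σ
        have hvτ : v ∈ τ := hστ hvσ
        have hσ'τ : τ.erase v ⊆ τ := Finset.erase_subset _ _
        have hσ'K : τ.erase v ∈ K :=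
          (hK τ hτK).2 _ ⟨w, Finset.mem_erase.2 ⟨hwvne, hwτ⟩⟩ hσ'τ
        have hσ'card : (τ.erase v).card + 1 = τ.card := Finset.card_erase_add_one hvτ
        have hσ'ne : τ.erase v ≠ σ := fun h => (Finset.notMem_erase v τ) (h ▸ hvσ)
        have hflex := hmax _ hσ'K hσ'τ hσ'card hσ'ne
        have hρσ' : p.1 ⊆ τ.erase v := fun x hx =>
          Finset.mem_erase.2 ⟨fun he => hvρ (he ▸ hx), hρτ hx⟩
        have hfσ'τ : f (τ.erase v) = f τ :=
          (hEq _ hσ'K τ hτK hσ'τ).2 ⟨p, hp, hρσ', hτφ⟩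
        have hfσ'σ : f (τ.erase v) = f σ := hfσ'τ.trans hff.symm
        have hσe : σ = τ.erase w := by
          rw [hτeq, Finset.erase_insert hwσ]
        have hLL : LexLT σ (τ.erase v) := by
          refine lexLT_of_min (by omega) (a := v) ?_ (Finset.notMem_erase v τ) ?_
          · rw [hσe]
            exact Finset.mem_erase.2 ⟨fun h => hwvne h.symm, hvτ⟩
          · intro b hb hbσ
            obtain ⟨hbv, hbτ⟩ := Finset.mem_erase.1 hb
            have hbw : b = w := by
              by_contra hbw
              exact hbσ (hσe ▸ Finset.mem_erase.2 ⟨hbw, hbτ⟩)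
            exact hbw ▸ hvw
        rcases hflex with h | ⟨_, h | ⟨_, h⟩⟩
        · exact absurd hfσ'σ (ne_of_lt h)
        · omega
        · exact lexLT_asymm h hLL
      · -- then insert v σ would be a cofacet of σ smaller than τ
        have hτ'φ : insert v σ ⊆ p.2 := Finset.insert_subset hvφ hστφ
        have hτ'K : insert v σ ∈ K :=
          (hK _ hφK).2 _ ⟨v, Finset.mem_insert_self v σ⟩ hτ'φ
        have hτ'card : σ.card + 1 = (insert v σ).card :=
          (Finset.card_insert_of_notMem hvσ).symm
        have hvτ : v ∉ τ := by
          rw [hτeq]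
          simp only [Finset.mem_insert, not_or]
          exact ⟨fun h => hwvne h.symm, hvσ⟩
        have hτ'ne : insert v σ ≠ τ := fun h => hvτ (h ▸ Finset.mem_insert_self v σ)
        have hflex := hmin _ hτ'K (Finset.subset_insert v σ) hτ'card hτ'ne
        have hfτ' : f σ = f (insert v σ) :=
          (hEq σ hσK _ hτ'K (Finset.subset_insert v σ)).2 ⟨p, hp, hρσ, hτ'φ⟩
        have hLL : LexLT (insert v σ) τ := by
          refine lexLT_of_min (by omega) (a := v) (Finset.mem_insert_self v σ) hvτ ?_
          intro b hb hbτ'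
          have hbw : b = w := by
            rw [hτeq] at hb
            rcases Finset.mem_insert.1 hb with h | h
            · exact h
            · exact absurd (Finset.mem_insert_of_mem h) hbτ'
          exact hbw ▸ hvw
        rcases hflex with h | ⟨_, h | ⟨_, h⟩⟩
        · exact absurd (hff.symm.trans hfτ') (ne_of_lt h)
        · omega
        · exact lexLT_asymm h hLL
    subst hwv
    have hwτ' : w ∈ τ := hwτ
    refine ⟨p, hp, ?_, τ, w, hρτ, hτφ, hvd, hvmin, ?_, ?_⟩
    · intro h
      rw [h] at hvρ
      exact hvρ hvφ
    · rw [hτeq, Finset.sdiff_singleton_eq_erase, Finset.erase_insert hwσ]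
    · exact (Finset.union_eq_left.2 (Finset.singleton_subset_iff.2 hwτ')).symm
  · -- Tilde pair → apparent pair with zero persistence
    rintro ⟨p, hp, hpne, ψ, v, hρψ, hψφ, hvd, hvmin, hσdef, hτdef⟩
    obtain ⟨hρK, hφK, hρφ⟩ := hP1 p hp
    obtain ⟨hvφ, hvρ⟩ := Finset.mem_sdiff.1 hvd
    subst hσdef; subst hτdef
    have hρσ : p.1 ⊆ ψ \ {v} := fun x hx =>
      Finset.mem_sdiff.2 ⟨hρψ hx, by
        simp only [Finset.mem_singleton]
        rintro rfl
        exact hvρ hx⟩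
    have hστ : ψ \ {v} ⊆ ψ ∪ {v} :=
      Finset.sdiff_subset.trans Finset.subset_union_left
    have hτφ : ψ ∪ {v} ⊆ p.2 :=
      Finset.union_subset hψφ (Finset.singleton_subset_iff.2 hvφ)
    have hρτ : p.1 ⊆ ψ ∪ {v} := hρσ.trans hστ
    have hρne : p.1.Nonempty := (hK _ hρK).1
    have hσK : ψ \ {v} ∈ K := (hK _ hφK).2 _ (hρne.mono hρσ) (hστ.trans hτφ)
    have hτK : ψ ∪ {v} ∈ K := (hK _ hφK).2 _ (hρne.mono hρτ) hτφ
    have hτins : ψ ∪ {v} = insert v (ψ \ {v}) := by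
      ext x
      simp only [Finset.mem_union, Finset.mem_insert, Finset.mem_sdiff,
        Finset.mem_singleton]
      tauto
    have hvnσ : v ∉ ψ \ {v} := by simp
    have hcard : (ψ \ {v}).card + 1 = (ψ ∪ {v}).card := by
      rw [hτins, Finset.card_insert_of_notMem hvnσ]
    have hτev : (ψ ∪ {v}).erase v = ψ \ {v} := by
      rw [hτins, Finset.erase_insert hvnσ]
    have hvτ : v ∈ ψ ∪ {v} := Finset.mem_union_right _ (Finset.mem_singleton_self v)
    have hfeq : f (ψ \ {v}) = f (ψ ∪ {v}) :=
      (hEq _ hσK _ hτK hστ).2 ⟨p, hp, hρσ, hτφ⟩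
    refine ⟨⟨hσK, hτK, hστ, hcard, ?_, ?_⟩, hfeq⟩
    · -- maximal facet
      intro σ' hσ'K hσ'τ hσ'card hσ'ne
      have hfle : f σ' ≤ f (ψ ∪ {v}) := hMono _ hσ'K _ hτK hσ'τ
      rcases lt_or_eq_of_le hfle with h | h
      · exact Or.inl (hfeq ▸ h)
      · obtain ⟨q, hq, hq1, hq2⟩ := (hEq σ' hσ'K _ hτK hσ'τ).1 h
        have hqp : q = p :=
          (hP2 _ hτK).unique ⟨hq, hq1.trans hσ'τ, hq2⟩ ⟨hp, hρτ, hτφ⟩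
        rw [hqp] at hq1 hq2
        obtain ⟨u, huσ', hτu⟩ := cofacet_eq hσ'τ hσ'card
        have hσ'e : σ' = (ψ ∪ {v}).erase u := by
          rw [hτu, Finset.erase_insert huσ']
        have huτ : u ∈ ψ ∪ {v} := hτu ▸ Finset.mem_insert_self u σ'
        have huρ : u ∉ p.1 := fun h' => huσ' (hq1 h')
        have hvu : v ≤ u := hvmin u (Finset.mem_sdiff.2 ⟨hτφ huτ, huρ⟩)
        have huv : u ≠ v := by
          rintro rfl
          exact hσ'ne (hσ'e.trans hτev)
        have hvu' : v < u := lt_of_le_of_ne hvu (fun h' => huv h'.symm)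
        have hLL : LexLT σ' (ψ \ {v}) := by
          refine lexLT_of_min (by omega) (a := v) ?_ hvnσ ?_
          · rw [hσ'e]
            exact Finset.mem_erase.2 ⟨fun h' => huv h'.symm, hvτ⟩
          · intro b hb hbσ'
            have hbτ : b ∈ ψ ∪ {v} := hστ hb
            have hbv : b ≠ v := (Finset.mem_sdiff.1 hb).2 ∘ Finset.mem_singleton.2
            have hbu : b = u := by
              by_contra hbu
              exact hbσ' (hσ'e ▸ Finset.mem_erase.2 ⟨hbu, hbτ⟩)
            exact hbu ▸ hvu'
        exact Or.inr ⟨h.trans hfeq.symm, Or.inr ⟨by omega, hLL⟩⟩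
    · -- minimal cofacet
      intro τ' hτ'K hστ' hcard' hτ'ne
      have hfle : f (ψ \ {v}) ≤ f τ' := hMono _ hσK _ hτ'K hστ'
      rcases lt_or_eq_of_le hfle with h | h
      · exact Or.inl (hfeq ▸ h)
      · obtain ⟨q, hq, hq1, hq2⟩ := (hEq _ hσK _ hτ'K hστ').1 h
        have hqp : q = p :=
          (hP2 _ hσK).unique ⟨hq, hq1, hστ'.trans hq2⟩ ⟨hp, hρσ, hστ.trans hτφ⟩
        rw [hqp] at hq1 hq2
        obtain ⟨u, huσ, hτ'u⟩ := cofacet_eq hστ' hcard'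
        have huτ' : u ∈ τ' := hτ'u ▸ Finset.mem_insert_self u _
        have huφ : u ∈ p.2 := hq2 huτ'
        have huρ : u ∉ p.1 := fun h' => huσ (hρσ h')
        have hvu : v ≤ u := hvmin u (Finset.mem_sdiff.2 ⟨huφ, huρ⟩)
        have huv : u ≠ v := by
          rintro rfl
          exact hτ'ne (hτ'u.trans hτins.symm)
        have hvu' : v < u := lt_of_le_of_ne hvu (fun h' => huv h'.symm)
        have hvτ' : v ∉ τ' := by
          rw [hτ'u]
          simp only [Finset.mem_insert, not_or]
          exact ⟨fun h' => huv h'.symm, hvnσ⟩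
        have hLL : LexLT (ψ ∪ {v}) τ' := by
          refine lexLT_of_min (by omega) (a := v) hvτ hvτ' ?_
          intro b hb hbτ
          have hbu : b = u := by
            rw [hτ'u] at hb
            rcases Finset.mem_insert.1 hb with h' | h'
            · exact h'
            · exact absurd (hστ h') hbτ
          exact hbu ▸ hvu'
        exact Or.inr ⟨hfeq.symm.trans h, Or.inr ⟨by omega, hLL⟩⟩
end

section
/- Let (V,d) be a finite tree metric space for a weighted tree T = (V,E), with vertices totally ordered compatibly with T (extending the partial order obtained by rooting T). Then for every u > t > 0 such that no tree edge has length in the interval (t, u], the Vietoris–Rips complex VR_u(V) collapses onto VR_t(V), which collapses onto the subforest T_t of tree edges of length at most t; in particular the persistent homology of the Vietoris–Rips filtration of V is trivial in all degrees > 0. -/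
/-- The subforest `T_t`: the 1-dimensional subcomplex consisting of all vertices
and the tree edges of length at most `t`. -/
def TreeComplex (V : Type*) [MetricSpace V] [DecidableEq V]
    (G : SimpleGraph V) (t : ℝ) : Set (Finset V) :=
  {σ | (∃ v : V, σ = {v}) ∨ ∃ a b : V, G.Adj a b ∧ dist a b ≤ t ∧ σ = {a, b}}

section Abstract

variable {X : Type*}

/-- Elementary collapse avoiding a protected set `P`. -/
def ECA (P K L : Set (Finset X)) : Prop :=
  ∃ σ τ : Finset X, σ ∈ K ∧ τ ∈ K ∧ σ ∉ P ∧ τ ∉ P ∧ σ ⊂ τ ∧ σ.card + 1 = τ.card ∧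
    (∀ ρ ∈ K, σ ⊂ ρ → ρ = τ) ∧ L = K \ {σ, τ}

def CollapsesAvoid (P K L : Set (Finset X)) : Prop :=
  Relation.ReflTransGen (ECA P) K L

lemma CollapsesAvoid.collapses {P K L : Set (Finset X)} (h : CollapsesAvoid P K L) :
    Collapses K L :=
  Relation.ReflTransGen.lift id
    (fun _ _ ⟨σ, τ, h1, h2, _, _, h5, h6, h7, h8⟩ => ⟨σ, τ, h1, h2, h5, h6, h7, h8⟩ :
      ∀ K L : Set (Finset X), ECA P K L → ElemCollapse (id K) (id L)) K L h

lemma CollapsesAvoid.union {P : Set (Finset X)} {C : Set (Finset X)} :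
    ∀ {K L : Set (Finset X)}, CollapsesAvoid P K L →
      (∀ ρ ∈ C, ρ ∉ K) → (∀ ρ ∈ C, ∀ σ ∈ K, σ ⊂ ρ → σ ∈ P) →
      CollapsesAvoid P (K ∪ C) (L ∪ C) := by
  intro K L h
  induction h using Relation.ReflTransGen.head_induction_on with
  | refl => intro _ _; exact Relation.ReflTransGen.refl
  | head step tail ih =>
    rename_i K K'
    intro hdisj hC
    obtain ⟨σ, τ, hσK, hτK, hσP, hτP, hsub, hcard, hfree, rfl⟩ := step
    have hσC : σ ∉ C := fun hσC => hdisj σ hσC hσK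
    have hτC : τ ∉ C := fun hτC => hdisj τ hτC hτK
    have heq : (K \ {σ, τ}) ∪ C = (K ∪ C) \ {σ, τ} := by
      ext x
      simp only [Set.mem_union, Set.mem_diff, Set.mem_insert_iff, Set.mem_singleton_iff]
      constructor
      · rintro (⟨hx, hn⟩ | hx)
        · exact ⟨Or.inl hx, hn⟩
        · refine ⟨Or.inr hx, ?_⟩
          rintro (rfl | rfl) <;> [exact hσC hx; exact hτC hx]
      · rintro ⟨hx | hx, hn⟩
        · exact Or.inl ⟨hx, hn⟩
        · exact Or.inr hx
    refine Relation.ReflTransGen.head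
      ⟨σ, τ, Or.inl hσK, Or.inl hτK, hσP, hτP, hsub, hcard, ?_, heq⟩
      (ih ?_ ?_)
    · rintro ρ (hρ | hρ) hsρ
      · exact hfree ρ hρ hsρ
      · exact absurd (hC ρ hρ σ hσK hsρ) hσP
    · exact fun ρ hρ hρK => hdisj ρ hρ hρK.1
    · exact fun ρ hρ σ' hσ' hs => hC ρ hρ σ' hσ'.1 hs

lemma matching_collapse [DecidableEq X] (P : Set (Finset X)) (m p : X) (hpm : p ≠ m)
    (n : ℕ) :
    ∀ K D : Set (Finset X), D.Finite → D.ncard ≤ n →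
      D ⊆ K → (∀ σ ∈ D, σ ∉ P) → (∀ σ ∈ D, m ∈ σ) →
      (∀ σ ∈ D, p ∉ σ → insert p σ ∈ D) →
      (∀ σ ∈ D, p ∈ σ → σ.erase p ∈ D) →
      (∀ ρ ∈ K, ∀ σ : Finset X, σ ⊆ ρ → σ.Nonempty → σ ∈ K) →
      (∀ σ ∈ D, ∀ ρ ∈ K, σ ⊂ ρ → p ∉ ρ → ρ ∈ D) →
      CollapsesAvoid P K (K \ D) := by
  induction n with
  | zero =>
    intro K D hfin hcard _ _ _ _ _ _ _
    have hD : D = ∅ := (Set.ncard_eq_zero hfin).1 (Nat.le_zero.1 hcard)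
    subst hD
    rw [Set.diff_empty]
    exact Relation.ReflTransGen.refl
  | succ n ih =>
    intro K D hfin hcard hDK hDP hDm hup hdown hKdown hupcl
    rcases D.eq_empty_or_nonempty with rfl | ⟨σ₀, hσ₀⟩
    · rw [Set.diff_empty]
      exact Relation.ReflTransGen.refl
    · have hex : ∃ σ ∈ D, p ∉ σ := by
        by_cases hp : p ∈ σ₀
        · exact ⟨σ₀.erase p, hdown _ hσ₀ hp, Finset.notMem_erase p σ₀⟩
        · exact ⟨σ₀, hσ₀, hp⟩
      obtain ⟨σ₁, hσ₁D, hσ₁p⟩ := hex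
      have hFne : (hfin.toFinset.filter (fun σ => p ∉ σ)).Nonempty :=
        ⟨σ₁, by simp [Set.Finite.mem_toFinset, hσ₁D, hσ₁p]⟩
      obtain ⟨σ, hσF, hmax⟩ :=
        (hfin.toFinset.filter (fun σ => p ∉ σ)).exists_max_image Finset.card hFne
      rw [Finset.mem_filter, Set.Finite.mem_toFinset] at hσF
      obtain ⟨hσD, hσp⟩ := hσF
      set τ : Finset X := insert p σ with hτdef
      have hτD : τ ∈ D := hup σ hσD hσp
      have hστ : σ ⊂ τ := Finset.ssubset_insert hσp
      have hmax' : ∀ ρ ∈ D, p ∉ ρ → ρ.card ≤ σ.card := by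
        intro ρ hρ hρp
        exact hmax ρ (by simp [Set.Finite.mem_toFinset, hρ, hρp])
      have hfree : ∀ ρ ∈ K, σ ⊂ ρ → ρ = τ := by
        intro ρ hρK hρ
        by_cases hpρ : p ∈ ρ
        · have hsub : σ ⊆ ρ.erase p := Finset.subset_erase.2 ⟨hρ.subset, hσp⟩
          rcases hsub.ssubset_or_eq with hlt | heq
          · have hmem : ρ.erase p ∈ K :=
              hKdown ρ hρK _ (Finset.erase_subset _ _) ⟨m, hsub (hDm σ hσD)⟩
            have : ρ.erase p ∈ D :=
              hupcl σ hσD _ hmem hlt (Finset.notMem_erase _ _)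
            exact absurd (hmax' _ this (Finset.notMem_erase _ _))
              (not_le.2 (Finset.card_lt_card hlt))
          · rw [hτdef, heq, Finset.insert_erase hpρ]
        · have : ρ ∈ D := hupcl σ hσD ρ hρK hρ hpρ
          exact absurd (hmax' ρ this hpρ) (not_le.2 (Finset.card_lt_card hρ))
      have hstep : ECA P K (K \ {σ, τ}) :=
        ⟨σ, τ, hDK hσD, hDK hτD, hDP σ hσD, hDP τ hτD, hστ,
          (Finset.card_insert_of_notMem hσp).symm, hfree, rfl⟩
      have hτσne : σ ≠ τ := hστ.ne
      have hDsub : D \ {σ, τ} ⊂ D := by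
        constructor
        · exact Set.diff_subset
        · intro hs
          have := hs hσD
          simp at this
      have hcard' : (D \ {σ, τ}).ncard ≤ n := by
        have := Set.ncard_lt_ncard hDsub hfin
        omega
      have hrec : CollapsesAvoid P (K \ {σ, τ}) ((K \ {σ, τ}) \ (D \ {σ, τ})) := by
        apply ih (K \ {σ, τ}) (D \ {σ, τ}) (hfin.subset Set.diff_subset) hcard'
        · rintro ρ ⟨hρ, hρn⟩; exact ⟨hDK hρ, hρn⟩
        · exact fun ρ hρ => hDP ρ hρ.1
        · exact fun ρ hρ => hDm ρ hρ.1
        · rintro ρ ⟨hρ, hρn⟩ hpρ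
          refine ⟨hup ρ hρ hpρ, ?_⟩
          simp only [Set.mem_insert_iff, Set.mem_singleton_iff] at hρn ⊢
          push_neg at hρn ⊢
          constructor
          · intro h; exact hσp (h ▸ Finset.mem_insert_self p ρ)
          · intro h
            apply hρn.1
            have : (insert p ρ).erase p = (insert p σ).erase p := by rw [h]
            rwa [Finset.erase_insert hpρ, Finset.erase_insert hσp] at this
        · rintro ρ ⟨hρ, hρn⟩ hpρ
          refine ⟨hdown ρ hρ hpρ, ?_⟩
          simp only [Set.mem_insert_iff, Set.mem_singleton_iff] at hρn ⊢
          push_neg at hρn ⊢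
          constructor
          · intro h
            apply hρn.2
            rw [hτdef, ← h, Finset.insert_erase hpρ]
          · intro h; exact (Finset.notMem_erase p ρ) (h ▸ Finset.mem_insert_self p σ)
        · rintro ρ ⟨hρK, hρn⟩ σ' hσ'ρ hσ'ne
          simp only [Set.mem_insert_iff, Set.mem_singleton_iff] at hρn
          push_neg at hρn
          refine ⟨hKdown ρ hρK σ' hσ'ρ hσ'ne, ?_⟩
          simp only [Set.mem_insert_iff, Set.mem_singleton_iff]
          push_neg
          constructor
          · rintro rfl
            rcases hσ'ρ.ssubset_or_eq with hlt | heq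
            · exact hρn.2 (hfree ρ hρK hlt)
            · exact hρn.1 heq.symm
          · rintro rfl
            have : σ ⊂ ρ := lt_of_lt_of_le hστ hσ'ρ
            exact hρn.2 (hfree ρ hρK this)
        · rintro σ' ⟨hσ'D, _⟩ ρ ⟨hρK, hρn⟩ hsub hpρ
          simp only [Set.mem_insert_iff, Set.mem_singleton_iff] at hρn
          push_neg at hρn
          exact ⟨hupcl σ' hσ'D ρ hρK hsub hpρ, by
            simp only [Set.mem_insert_iff, Set.mem_singleton_iff]; push_neg
            exact hρn⟩
      have hfinal : (K \ {σ, τ}) \ (D \ {σ, τ}) = K \ D := by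
        ext x
        simp only [Set.mem_diff, Set.mem_insert_iff, Set.mem_singleton_iff]
        constructor
        · rintro ⟨⟨hxK, hxn⟩, hxD⟩
          refine ⟨hxK, fun hxD' => hxD ⟨hxD', hxn⟩⟩
        · rintro ⟨hxK, hxD⟩
          refine ⟨⟨hxK, ?_⟩, fun h => hxD h.1⟩
          rintro (rfl | rfl)
          · exact hxD hσD
          · exact hxD hτD
      rw [hfinal] at hrec
      exact Relation.ReflTransGen.head hstep hrec

end Abstract

lemma CollapsesAvoid.refl {X : Type*} {P K : Set (Finset X)} : CollapsesAvoid P K K :=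
  Relation.ReflTransGen.refl

lemma CollapsesAvoid.trans {X : Type*} {P K L M : Set (Finset X)}
    (h : CollapsesAvoid P K L) (h' : CollapsesAvoid P L M) : CollapsesAvoid P K M :=
  Relation.ReflTransGen.trans h h'

section Geometry

open SimpleGraph

variable {V : Type*} [MetricSpace V] [LinearOrder V] {G : SimpleGraph V}

lemma tree_parent (hT : G.IsTree) (l : Sym2 V → ℝ)
    (hd : ∀ (x y : V) (p : G.Walk x y), p.IsPath → dist x y = (p.edges.map l).sum)
    {root : V} (hroot : ∀ u w : V, (∃ p : G.Walk root w, p.IsPath ∧ u ∈ p.support) → u ≤ w)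
    {m : V} (hm : root ≠ m) :
    ∃ p : V, G.Adj p m ∧ p < m ∧ (∀ x, x < m → dist x m = dist x p + dist p m) ∧
      (∀ a, G.Adj a m → a < m → a = p) := by
  classical
  have cp : ∀ x y : V, G.Path x y := fun x y =>
    (Classical.choice (hT.isConnected x y) : G.Walk x y).toPath
  have uniq : ∀ (x y : V) (q : G.Walk x y), q.IsPath → q = (cp x y).1 := by
    intro x y q hq
    exact congrArg Subtype.val (hT.IsAcyclic.path_unique ⟨q, hq⟩ (cp x y))
  have hle : ∀ w x : V, x ∈ (cp root w).1.support → x ≤ w := fun w x hx =>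
    hroot x w ⟨(cp root w).1, (cp root w).2, hx⟩
  obtain ⟨p, hmp, P₂, hPdec⟩ := Walk.exists_eq_cons_of_ne (Ne.symm hm) (cp root m).1.reverse
  have hPrevPath : ((cp root m).1.reverse).IsPath := (cp root m).2.reverse
  have hP₂ : P₂.IsPath ∧ m ∉ P₂.support := by
    rw [hPdec, Walk.cons_isPath_iff] at hPrevPath
    exact hPrevPath
  have hpmem : p ∈ (cp root m).1.support := by
    rw [← List.mem_reverse, ← Walk.support_reverse, hPdec, Walk.support_cons]
    exact List.mem_cons_of_mem _ P₂.start_mem_support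
  have hpne : p ≠ m := fun h => hP₂.2 (h ▸ P₂.start_mem_support)
  have hplt : p < m := lt_of_le_of_ne (hle m p hpmem) hpne
  -- the second vertex of the reverse of the root-path is p
  have hgetP : (cp root m).1.reverse.getVert 1 = p := by
    rw [hPdec, Walk.getVert_cons_succ, Walk.getVert_zero]
  -- F4 : any neighbour of m which is < m equals p
  have hF4 : ∀ a, G.Adj a m → a = p ∨ m ≤ a := by
    intro a ha
    by_cases hmem : m ∈ (cp root a).1.support
    · exact Or.inr (hle a m hmem)
    · left
      have hWrev : ((cp root a).1.concat ha).reverse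
          = Walk.cons ha.symm (cp root a).1.reverse := Walk.reverse_concat _ _
      have hWpath : ((cp root a).1.concat ha).IsPath := by
        rw [← Walk.isPath_reverse_iff, hWrev, Walk.cons_isPath_iff]
        refine ⟨(cp root a).2.reverse, ?_⟩
        rwa [Walk.support_reverse, List.mem_reverse]
      have hWeq : (cp root a).1.concat ha = (cp root m).1 := uniq _ _ _ hWpath
      have h1 : ((cp root a).1.concat ha).reverse.getVert 1 = a := by
        rw [hWrev, Walk.getVert_cons_succ, Walk.getVert_zero]
      rw [hWeq, hgetP] at h1
      exact h1.symm
  -- key distance identity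
  have hdist : ∀ x, x < m → dist x m = dist x p + dist p m := by
    intro x hx
    have hxm : m ≠ x := ne_of_gt hx
    obtain ⟨a, ham, q₂, hqdec⟩ := Walk.exists_eq_cons_of_ne hxm (cp x m).1.reverse
    have hqrevPath : ((cp x m).1.reverse).IsPath := (cp x m).2.reverse
    have hq₂ : q₂.IsPath ∧ m ∉ q₂.support := by
      rw [hqdec, Walk.cons_isPath_iff] at hqrevPath
      exact hqrevPath
    have hane : a ≠ m := fun h => hq₂.2 (h ▸ q₂.start_mem_support)
    have haq : a ∈ (cp x m).1.support := by
      rw [← List.mem_reverse, ← Walk.support_reverse, hqdec, Walk.support_cons]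
      exact List.mem_cons_of_mem _ q₂.start_mem_support
    -- a = p
    have hap : a = p := by
      have hbyp : ((cp root x).1.reverse.append (cp root m).1).bypass = (cp x m).1 :=
        uniq _ _ _ (Walk.bypass_isPath _)
      have haW : a ∈ (cp root x).1.support ∨ a ∈ (cp root m).1.support := by
        have := Walk.support_bypass_subset _ (hbyp ▸ haq)
        rw [Walk.mem_support_append_iff, Walk.support_reverse, List.mem_reverse] at this
        exact this
      rcases haW with haW | haW
      · rcases hF4 a ham.symm with h | h
        · exact h
        · exact absurd (lt_of_le_of_lt (h.trans (hle x a haW)) hx) (lt_irrefl m)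
      · -- a lies on the root-path to m; the unique path from a to m is the single edge
        have hsingle : (Walk.cons ham.symm Walk.nil : G.Walk a m).IsPath := by
          rw [Walk.cons_isPath_iff]
          simp [hane]
        have hdpath : ((cp root m).1.dropUntil a haW).IsPath := (cp root m).2.dropUntil haW
        have hd1 : (cp root m).1.dropUntil a haW = Walk.cons ham.symm Walk.nil :=
          (uniq a m _ hdpath).trans (uniq a m _ hsingle).symm
        have hspec := Walk.take_spec (cp root m).1 haW
        have hrev : (cp root m).1.reverse
            = Walk.cons ham ((cp root m).1.takeUntil a haW).reverse := by
          have h5 := congrArg Walk.reverse hspec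
          rw [Walk.reverse_append, hd1] at h5
          simp only [Walk.reverse_cons, Walk.reverse_nil, Walk.nil_append,
            Walk.cons_append, Walk.concat_nil] at h5
          exact h5.symm
        have : (cp root m).1.reverse.getVert 1 = a := by
          rw [hrev, Walk.getVert_cons_succ, Walk.getVert_zero]
        rw [hgetP] at this
        exact this.symm
    -- distances
    have hsingle : (Walk.cons ham.symm Walk.nil : G.Walk a m).IsPath := by
      rw [Walk.cons_isPath_iff]; simp [hane]
    have hqeq : (cp x m).1 = q₂.reverse.concat ham.symm := by
      have : (cp x m).1.reverse.reverse = (Walk.cons ham q₂).reverse := by rw [hqdec]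
      rwa [Walk.reverse_reverse, Walk.reverse_cons] at this
    have e1 : dist x m = ((q₂.reverse.concat ham.symm).edges.map l).sum := by
      rw [← hqeq]; exact hd x m (cp x m).1 (cp x m).2
    rw [Walk.edges_concat, List.concat_eq_append, List.map_append, List.sum_append] at e1
    have e2 : dist x a = (q₂.reverse.edges.map l).sum := hd x a q₂.reverse hq₂.1.reverse
    have e3 : dist a m = l s(a, m) := by
      have := hd a m _ hsingle
      simpa using this
    rw [← e2] at e1
    simp only [List.map_cons, List.map_nil, List.sum_cons, List.sum_nil, add_zero] at e1
    rw [← e3] at e1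
    rw [hap] at e1
    exact e1
  exact ⟨p, hmp.symm, hplt, hdist, fun a ha halt => (hF4 a ha).resolve_right (not_le.2 halt)⟩

end Geometry

/-- For a finite tree metric space with vertices totally ordered compatibly with the
tree, and `u > t > 0` such that no tree edge has length in `(t, u]`, the
Vietoris–Rips complex `VR_u(V)` collapses onto `VR_t(V)`, which collapses onto the
subforest `T_t` of tree edges of length at most `t` (hence the persistent homology
of the Vietoris–Rips filtration is trivial in degrees `> 0`). -/
theorem stmt19 (V : Type*) [MetricSpace V] [Fintype V] [LinearOrder V]
    (G : SimpleGraph V) (l : Sym2 V → ℝ) (hT : G.IsTree)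
    (hl : ∀ e ∈ G.edgeSet, 0 < l e)
    (hd : ∀ (x y : V) (p : G.Walk x y), p.IsPath → dist x y = (p.edges.map l).sum)
    (hcompat : ∃ root : V, ∀ u w : V,
      (∃ p : G.Walk root w, p.IsPath ∧ u ∈ p.support) → u ≤ w)
    (t u : ℝ) (ht : 0 < t) (htu : t < u)
    (hgap : ∀ a b : V, G.Adj a b → ¬(t < dist a b ∧ dist a b ≤ u)) :
    Collapses (VRComplex V u) (VRComplex V t) ∧
      Collapses (VRComplex V t) (TreeComplex V G t) := by
  classical
  obtain ⟨root, hroot⟩ := hcompat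
  have hrootle : ∀ w : V, root ≤ w := by
    intro w
    exact (hT.isConnected root w).elim fun q =>
      hroot root w ⟨q.toPath.1, q.toPath.2, SimpleGraph.Walk.start_mem_support _⟩
  -- basic facts about Vietoris–Rips complexes
  have hVRdown : ∀ (s : ℝ) (ρ : Finset V), ρ ∈ VRComplex V s →
      ∀ σ : Finset V, σ ⊆ ρ → σ.Nonempty → σ ∈ VRComplex V s :=
    fun s ρ hρ σ hσρ hσ => ⟨hσ, fun x hx y hy => hρ.2 x (hσρ hx) y (hσρ hy)⟩
  have hsing : ∀ (s : ℝ), 0 ≤ s → ∀ v : V, ({v} : Finset V) ∈ VRComplex V s := by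
    intro s hs v
    refine ⟨⟨v, Finset.mem_singleton_self v⟩, ?_⟩
    intro x hx y hy
    rw [Finset.mem_singleton] at hx hy
    subst hx; subst hy
    simpa [dist_self] using hs
  have htusub : VRComplex V t ⊆ VRComplex V u :=
    fun σ hσ => ⟨hσ.1, fun x hx y hy => (hσ.2 x hx y hy).trans htu.le⟩
  have hcard2 : ∀ σ : Finset V, σ.Nonempty → σ ∉ VRComplex V t → 2 ≤ σ.card := by
    intro σ hne hσ
    by_contra h
    apply hσ
    refine ⟨hne, fun x hx y hy => ?_⟩
    have hxy : x = y := by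
      have hp := Finset.card_pos.2 hne
      have h1 : σ.card = 1 := by omega
      obtain ⟨a, ha⟩ := Finset.card_eq_one.1 h1
      subst ha
      rw [Finset.mem_singleton] at hx hy
      rw [hx, hy]
    rw [hxy, dist_self]; exact ht.le
  have hparent : ∀ m : V, (∃ x, x < m) →
      ∃ p : V, G.Adj p m ∧ p < m ∧ (∀ x, x < m → dist x m = dist x p + dist p m) ∧
        (∀ a, G.Adj a m → a < m → a = p) := by
    rintro m ⟨x, hx⟩
    refine tree_parent hT l hd hroot ?_
    intro h
    exact absurd (h ▸ hrootle x) (not_le.2 hx)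
  have hcone : ∀ (s : ℝ) (m p : V), p < m → (∀ x, x < m → dist x m = dist x p + dist p m) →
      ∀ σ : Finset V, σ ∈ VRComplex V s → m ∈ σ → (∀ x ∈ σ, x ≤ m) → 2 ≤ σ.card →
        insert p σ ∈ VRComplex V s ∧ dist p m ≤ s := by
    intro s m p hplt hkey σ hσ hmσ hbd hc
    obtain ⟨x, hxσ, hxm⟩ := Finset.exists_mem_ne (lt_of_lt_of_le one_lt_two hc) m
    have hxlt : x < m := lt_of_le_of_ne (hbd x hxσ) hxm
    have hpm : dist p m ≤ s := by
      have h1 := hkey x hxlt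
      have h2 : dist x m ≤ s := hσ.2 x hxσ m hmσ
      have h0 : (0:ℝ) ≤ dist x p := dist_nonneg
      linarith
    have hto_p : ∀ y ∈ σ, dist y p ≤ s := by
      intro y hy
      rcases eq_or_ne y m with rfl | hym
      · rw [dist_comm]; exact hpm
      · have hylt : y < m := lt_of_le_of_ne (hbd y hy) hym
        have h1 := hkey y hylt
        have h2 : dist y m ≤ s := hσ.2 y hy m hmσ
        have h0 : (0:ℝ) ≤ dist p m := dist_nonneg
        linarith
    have hs0 : (0:ℝ) ≤ s := le_trans dist_nonneg hpm
    refine ⟨⟨⟨m, Finset.mem_insert_of_mem hmσ⟩, ?_⟩, hpm⟩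
    intro a ha b hb
    rw [Finset.mem_insert] at ha hb
    rcases ha with rfl | ha <;> rcases hb with rfl | hb
    · simpa [dist_self] using hs0
    · rw [dist_comm]; exact hto_p b hb
    · exact hto_p a ha
    · exact hσ.2 a ha b hb
  -- base case: at the minimum of the order
  have hbase1 : ∀ m : V, (∀ x : V, ¬ x < m) →
      {σ : Finset V | σ ∈ VRComplex V u ∧ ∀ x ∈ σ, x ≤ m}
        = {σ : Finset V | σ ∈ VRComplex V t ∧ ∀ x ∈ σ, x ≤ m} := by
    intro m hno
    ext σ
    simp only [Set.mem_setOf_eq]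
    constructor
    · rintro ⟨hσ, hbd⟩
      have hall : ∀ x ∈ σ, x = m := fun x hx =>
        le_antisymm (hbd x hx) (not_lt.1 (hno x))
      refine ⟨⟨hσ.1, fun x hx y hy => ?_⟩, hbd⟩
      rw [hall x hx, hall y hy, dist_self]
      exact ht.le
    · rintro ⟨hσ, hbd⟩
      exact ⟨htusub hσ, hbd⟩
  -- Phase 1 induction
  have phase1 : ∀ (n : ℕ) (m : V), (Finset.univ.filter (fun x => x < m)).card ≤ n →
      CollapsesAvoid (VRComplex V t)
        {σ : Finset V | σ ∈ VRComplex V u ∧ ∀ x ∈ σ, x ≤ m}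
        {σ : Finset V | σ ∈ VRComplex V t ∧ ∀ x ∈ σ, x ≤ m} := by
    intro n
    induction n with
    | zero =>
      intro m hm
      have hno : ∀ x : V, ¬ x < m := by
        intro x hx
        have h1 : x ∈ Finset.univ.filter (fun x => x < m) := by simp [hx]
        have := Finset.card_pos.2 ⟨x, h1⟩
        omega
      rw [hbase1 m hno]
      exact CollapsesAvoid.refl
    | succ n ih =>
      intro m hm
      by_cases hex : ∃ x : V, x < m
      swap
      · push_neg at hex
        rw [hbase1 m (fun x => not_lt.2 (hex x))]
        exact CollapsesAvoid.refl
      obtain ⟨p, hpadj, hplt, hkey, huniq⟩ := hparent m hex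
      have hmp : m ≠ p := ne_of_gt hplt
      set K : Set (Finset V) := {σ : Finset V | σ ∈ VRComplex V u ∧ ∀ x ∈ σ, x ≤ m} with hK
      set D : Set (Finset V) := {σ : Finset V | σ ∈ K ∧ m ∈ σ ∧ σ ∉ VRComplex V t} with hDdef
      have hDne : ∀ σ ∈ D, σ.Nonempty := fun σ hσ => ⟨m, hσ.2.1⟩
      have hD2 : ∀ σ ∈ D, 2 ≤ σ.card := fun σ hσ => hcard2 σ (hDne σ hσ) hσ.2.2
      have hgapPM : ∀ σ ∈ D, p ∈ σ → dist p m ≤ t := by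
        intro σ hσ hpσ
        have hu : dist p m ≤ u := hσ.1.1.2 p hpσ m hσ.2.1
        by_contra hlt
        exact hgap p m hpadj ⟨not_le.1 hlt, hu⟩
      have step1 : CollapsesAvoid (VRComplex V t) K (K \ D) := by
        refine matching_collapse (VRComplex V t) m p (ne_of_lt hplt) D.ncard K D
          (Set.toFinite D) le_rfl (fun σ hσ => hσ.1) (fun σ hσ => hσ.2.2)
          (fun σ hσ => hσ.2.1) ?_ ?_ ?_ ?_
        · -- hup
          intro σ hσ hpσ
          have hins := hcone u m p hplt hkey σ hσ.1.1 hσ.2.1 hσ.1.2 (hD2 σ hσ)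
          refine ⟨⟨hins.1, ?_⟩, Finset.mem_insert_of_mem hσ.2.1, ?_⟩
          · intro x hx
            rcases Finset.mem_insert.1 hx with rfl | hx
            · exact hplt.le
            · exact hσ.1.2 x hx
          · intro hvt
            exact hσ.2.2 (hVRdown t _ hvt σ (Finset.subset_insert p σ) (hDne σ hσ))
        · -- hdown
          intro σ hσ hpσ
          have hmer : m ∈ σ.erase p := Finset.mem_erase.2 ⟨hmp, hσ.2.1⟩
          refine ⟨⟨hVRdown u σ hσ.1.1 _ (Finset.erase_subset p σ) ⟨m, hmer⟩, ?_⟩, hmer, ?_⟩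
          · exact fun x hx => hσ.1.2 x (Finset.erase_subset p σ hx)
          · intro herase
            apply hσ.2.2
            refine ⟨hDne σ hσ, ?_⟩
            have hdpm : dist p m ≤ t := hgapPM σ hσ hpσ
            intro x hx y hy
            have haux : ∀ z ∈ σ, z ≠ p → dist z p ≤ t := by
              intro z hz hzp
              by_cases hzm : z = m
              · rw [hzm, dist_comm]; exact hdpm
              · have hzlt : z < m := lt_of_le_of_ne (hσ.1.2 z hz) hzm
                have h1 := hkey z hzlt
                have hzer : z ∈ σ.erase p := Finset.mem_erase.2 ⟨hzp, hz⟩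
                have h2 : dist z m ≤ t := herase.2 z hzer m hmer
                have h0 : (0:ℝ) ≤ dist p m := dist_nonneg
                linarith
            by_cases hxp : x = p <;> by_cases hyp : y = p
            · rw [hxp, hyp, dist_self]; exact ht.le
            · rw [hxp, dist_comm]; exact haux y hy hyp
            · rw [hyp]; exact haux x hx hxp
            · exact herase.2 x (Finset.mem_erase.2 ⟨hxp, hx⟩) y (Finset.mem_erase.2 ⟨hyp, hy⟩)
        · -- K downward closed
          intro ρ hρ σ hσρ hσne
          exact ⟨hVRdown u ρ hρ.1 σ hσρ hσne, fun x hx => hρ.2 x (hσρ hx)⟩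
        · -- upward closedness of D
          intro σ hσ ρ hρ hsub hpρ
          refine ⟨hρ, hsub.subset hσ.2.1, ?_⟩
          intro hvt
          exact hσ.2.2 (hVRdown t ρ hvt σ hsub.subset (hDne σ hσ))
      set Kl : Set (Finset V) := {σ : Finset V | σ ∈ VRComplex V u ∧ ∀ x ∈ σ, x < m} with hKl
      set Cm : Set (Finset V) := {σ : Finset V | σ ∈ VRComplex V t ∧ m ∈ σ ∧ ∀ x ∈ σ, x ≤ m}
        with hCm
      have step2 : K \ D = Kl ∪ Cm := by
        ext σ
        simp only [Set.mem_diff, Set.mem_union, hDdef, Set.mem_setOf_eq, hKl, hCm, hK]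
        constructor
        · rintro ⟨⟨hσu, hbd⟩, hnd⟩
          by_cases hmσ : m ∈ σ
          · right
            refine ⟨?_, hmσ, hbd⟩
            by_contra hvt
            exact hnd ⟨⟨hσu, hbd⟩, hmσ, hvt⟩
          · left
            exact ⟨hσu, fun x hx => lt_of_le_of_ne (hbd x hx) (fun h => hmσ (h ▸ hx))⟩
        · rintro (⟨hσu, hbd⟩ | ⟨hσt, hmσ, hbd⟩)
          · refine ⟨⟨hσu, fun x hx => (hbd x hx).le⟩, ?_⟩
            rintro ⟨-, hmσ, -⟩
            exact absurd (hbd m hmσ) (lt_irrefl m)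
          · exact ⟨⟨htusub hσt, hbd⟩, fun h => h.2.2 hσt⟩
      set Ll : Set (Finset V) := {σ : Finset V | σ ∈ VRComplex V t ∧ ∀ x ∈ σ, x < m} with hLl
      have step3 : CollapsesAvoid (VRComplex V t) Kl Ll := by
        obtain ⟨x₀, hx₀⟩ := hex
        set F := Finset.univ.filter (fun x : V => x < m) with hF
        have hFne : F.Nonempty := ⟨x₀, by simp [hF, hx₀]⟩
        set m' := F.max' hFne with hm'
        have hm'lt : m' < m := (Finset.mem_filter.1 (F.max'_mem hFne)).2
        have hiff : ∀ x : V, x < m ↔ x ≤ m' := by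
          intro x
          constructor
          · intro hx; exact F.le_max' x (by simp [hF, hx])
          · intro hx; exact lt_of_le_of_lt hx hm'lt
        have e1 : Kl = {σ : Finset V | σ ∈ VRComplex V u ∧ ∀ x ∈ σ, x ≤ m'} := by
          ext σ
          simp only [hKl, Set.mem_setOf_eq]
          exact and_congr_right fun _ => forall₂_congr fun x _ => hiff x
        have e2 : Ll = {σ : Finset V | σ ∈ VRComplex V t ∧ ∀ x ∈ σ, x ≤ m'} := by
          ext σ
          simp only [hLl, Set.mem_setOf_eq]
          exact and_congr_right fun _ => forall₂_congr fun x _ => hiff x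
        rw [e1, e2]
        apply ih
        have hsub : Finset.univ.filter (fun x : V => x < m') ⊂ F := by
          rw [hF]
          constructor
          · intro x hx
            simp only [Finset.mem_filter, Finset.mem_univ, true_and] at hx ⊢
            exact lt_trans hx hm'lt
          · intro hsub'
            have : m' ∈ Finset.univ.filter (fun x : V => x < m') :=
              hsub' (by simp [hx₀, hm'lt])
            simp at this
        have := Finset.card_lt_card hsub
        omega
      have step4 : CollapsesAvoid (VRComplex V t) (Kl ∪ Cm) (Ll ∪ Cm) := by
        refine CollapsesAvoid.union step3 ?_ ?_
        · rintro ρ hρ hρK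
          exact absurd (hρK.2 m hρ.2.1) (lt_irrefl m)
        · rintro ρ hρ σ hσ hsub
          exact hVRdown t ρ hρ.1 σ hsub.subset hσ.1.1
      have step5 : Ll ∪ Cm = {σ : Finset V | σ ∈ VRComplex V t ∧ ∀ x ∈ σ, x ≤ m} := by
        ext σ
        simp only [Set.mem_union, hLl, hCm, Set.mem_setOf_eq]
        constructor
        · rintro (⟨hσt, hbd⟩ | ⟨hσt, hmσ, hbd⟩)
          · exact ⟨hσt, fun x hx => (hbd x hx).le⟩
          · exact ⟨hσt, hbd⟩
        · rintro ⟨hσt, hbd⟩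
          by_cases hmσ : m ∈ σ
          · exact Or.inr ⟨hσt, hmσ, hbd⟩
          · exact Or.inl ⟨hσt, fun x hx =>
              lt_of_le_of_ne (hbd x hx) (fun h => hmσ (h ▸ hx))⟩
      rw [step2] at step1
      rw [step5] at step4
      exact step1.trans step4
  -- Phase 2 base
  have hbase2 : ∀ m : V, (∀ x : V, ¬ x < m) →
      {σ : Finset V | σ ∈ VRComplex V t ∧ ∀ x ∈ σ, x ≤ m}
        = {σ : Finset V | σ ∈ TreeComplex V G t ∧ ∀ x ∈ σ, x ≤ m} := by
    intro m hno
    ext σ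
    simp only [Set.mem_setOf_eq]
    constructor
    · rintro ⟨hσ, hbd⟩
      have hall : ∀ x ∈ σ, x = m := fun x hx =>
        le_antisymm (hbd x hx) (not_lt.1 (hno x))
      have hσm : σ = {m} := by
        obtain ⟨a, ha⟩ := hσ.1
        ext y
        simp only [Finset.mem_singleton]
        constructor
        · exact fun hy => hall y hy
        · rintro rfl
          rwa [← hall a ha]
      exact ⟨Or.inl ⟨m, hσm⟩, hbd⟩
    · rintro ⟨hσ, hbd⟩
      rcases hσ with ⟨v, rfl⟩ | ⟨a, b, hab, hd', rfl⟩
      · exact ⟨hsing t ht.le v, hbd⟩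
      · exfalso
        have ha : a = m := le_antisymm (hbd a (by simp)) (not_lt.1 (hno a))
        have hb : b = m := le_antisymm (hbd b (by simp)) (not_lt.1 (hno b))
        exact hab.ne (ha.trans hb.symm)
  -- Phase 2 induction
  have phase2 : ∀ (n : ℕ) (m : V), (Finset.univ.filter (fun x => x < m)).card ≤ n →
      CollapsesAvoid {σ : Finset V | σ.card ≤ 1}
        {σ : Finset V | σ ∈ VRComplex V t ∧ ∀ x ∈ σ, x ≤ m}
        {σ : Finset V | σ ∈ TreeComplex V G t ∧ ∀ x ∈ σ, x ≤ m} := by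
    intro n
    induction n with
    | zero =>
      intro m hm
      have hno : ∀ x : V, ¬ x < m := by
        intro x hx
        have h1 : x ∈ Finset.univ.filter (fun x => x < m) := by simp [hx]
        have := Finset.card_pos.2 ⟨x, h1⟩
        omega
      rw [hbase2 m hno]
      exact CollapsesAvoid.refl
    | succ n ih =>
      intro m hm
      by_cases hex : ∃ x : V, x < m
      swap
      · push_neg at hex
        rw [hbase2 m (fun x => not_lt.2 (hex x))]
        exact CollapsesAvoid.refl
      obtain ⟨p, hpadj, hplt, hkey, huniq⟩ := hparent m hex
      have hmp : m ≠ p := ne_of_gt hplt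
      have hpairc : ({m, p} : Finset V).card = 2 := by
        rw [Finset.card_insert_of_notMem (by simp [hmp]), Finset.card_singleton]
      set K : Set (Finset V) := {σ : Finset V | σ ∈ VRComplex V t ∧ ∀ x ∈ σ, x ≤ m} with hK
      set D : Set (Finset V) :=
        {σ : Finset V | σ ∈ K ∧ m ∈ σ ∧ 2 ≤ σ.card ∧ σ ≠ {m, p}} with hDdef
      have step1 : CollapsesAvoid {σ : Finset V | σ.card ≤ 1} K (K \ D) := by
        refine matching_collapse _ m p (ne_of_lt hplt) D.ncard K D
          (Set.toFinite D) le_rfl (fun σ hσ => hσ.1)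
          (fun σ hσ => by simp only [Set.mem_setOf_eq]; have := hσ.2.2.1; omega)
          (fun σ hσ => hσ.2.1) ?_ ?_ ?_ ?_
        · -- hup
          intro σ hσ hpσ
          have hins := hcone t m p hplt hkey σ hσ.1.1 hσ.2.1 hσ.1.2 hσ.2.2.1
          have hcardins : (insert p σ).card = σ.card + 1 := Finset.card_insert_of_notMem hpσ
          refine ⟨⟨hins.1, ?_⟩, Finset.mem_insert_of_mem hσ.2.1,
            by have := hσ.2.2.1; omega, ?_⟩
          · intro x hx
            rcases Finset.mem_insert.1 hx with rfl | hx
            · exact hplt.le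
            · exact hσ.1.2 x hx
          · intro hcontra
            have := hσ.2.2.1
            rw [hcontra, hpairc] at hcardins
            omega
        · -- hdown
          intro σ hσ hpσ
          have hmer : m ∈ σ.erase p := Finset.mem_erase.2 ⟨hmp, hσ.2.1⟩
          have hsubmp : ({m, p} : Finset V) ⊆ σ := by
            intro x hx
            rcases Finset.mem_insert.1 hx with rfl | hx
            · exact hσ.2.1
            · rw [Finset.mem_singleton] at hx; subst hx; exact hpσ
          have hc3 : 3 ≤ σ.card := by
            by_contra hc
            have hle : σ.card ≤ ({m, p} : Finset V).card := by omega
            exact hσ.2.2.2 (Finset.eq_of_subset_of_card_le hsubmp hle).symm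
          have hec : (σ.erase p).card = σ.card - 1 := Finset.card_erase_of_mem hpσ
          refine ⟨⟨hVRdown t σ hσ.1.1 _ (Finset.erase_subset p σ) ⟨m, hmer⟩,
            fun x hx => hσ.1.2 x (Finset.erase_subset p σ hx)⟩, hmer, by omega, ?_⟩
          intro hcontra
          have : p ∈ σ.erase p := hcontra ▸ (by simp : p ∈ ({m, p} : Finset V))
          exact Finset.notMem_erase p σ this
        · -- K downward closed
          intro ρ hρ σ hσρ hσne
          exact ⟨hVRdown t ρ hρ.1 σ hσρ hσne, fun x hx => hρ.2 x (hσρ hx)⟩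
        · -- upward closed
          intro σ hσ ρ hρ hsub hpρ
          have hc : σ.card < ρ.card := Finset.card_lt_card hsub
          have h2 := hσ.2.2.1
          refine ⟨hρ, hsub.subset hσ.2.1, by omega, ?_⟩
          intro hcontra
          apply hpρ
          rw [hcontra]
          simp
      set Kl : Set (Finset V) := {σ : Finset V | σ ∈ VRComplex V t ∧ ∀ x ∈ σ, x < m} with hKl
      set Cm : Set (Finset V) :=
        {σ : Finset V | σ = {m} ∨ (σ = {m, p} ∧ dist p m ≤ t)} with hCm
      have hmemCm : ∀ ρ ∈ Cm, m ∈ ρ := by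
        rintro ρ (rfl | ⟨rfl, -⟩) <;> simp
      have step2 : K \ D = Kl ∪ Cm := by
        ext σ
        simp only [Set.mem_diff, Set.mem_union, hDdef, Set.mem_setOf_eq, hKl, hCm, hK]
        constructor
        · rintro ⟨⟨hσt, hbd⟩, hnd⟩
          by_cases hmσ : m ∈ σ
          · right
            by_cases hc : 2 ≤ σ.card
            · by_cases hpair : σ = {m, p}
              · refine Or.inr ⟨hpair, ?_⟩
                subst hpair
                exact hσt.2 p (by simp) m (by simp)
              · exact absurd ⟨⟨hσt, hbd⟩, hmσ, hc, hpair⟩ hnd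
            · left
              have h1 : σ.card = 1 := by
                have := Finset.card_pos.2 hσt.1
                omega
              obtain ⟨a, ha⟩ := Finset.card_eq_one.1 h1
              subst ha
              rw [Finset.mem_singleton] at hmσ
              rw [hmσ]
          · left
            exact ⟨hσt, fun x hx => lt_of_le_of_ne (hbd x hx) (fun h => hmσ (h ▸ hx))⟩
        · rintro (⟨hσt, hbd⟩ | hσc)
          · refine ⟨⟨hσt, fun x hx => (hbd x hx).le⟩, ?_⟩
            rintro ⟨-, hmσ, -⟩
            exact absurd (hbd m hmσ) (lt_irrefl m)
          · rcases hσc with rfl | ⟨rfl, hdist⟩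
            · refine ⟨⟨hsing t ht.le m, by simp⟩, ?_⟩
              rintro ⟨-, -, hc, -⟩
              simp at hc
            · refine ⟨⟨⟨⟨m, by simp⟩, ?_⟩, ?_⟩, ?_⟩
              · intro x hx y hy
                simp only [Finset.mem_insert, Finset.mem_singleton] at hx hy
                rcases hx with rfl | rfl <;> rcases hy with rfl | rfl
                · rw [dist_self]; exact ht.le
                · rw [dist_comm]; exact hdist
                · exact hdist
                · rw [dist_self]; exact ht.le
              · intro x hx
                simp only [Finset.mem_insert, Finset.mem_singleton] at hx
                rcases hx with rfl | rfl
                · exact le_refl x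
                · exact hplt.le
              · rintro ⟨-, -, -, hne⟩
                exact hne rfl
      set Ll : Set (Finset V) :=
        {σ : Finset V | σ ∈ TreeComplex V G t ∧ ∀ x ∈ σ, x < m} with hLl
      have step3 : CollapsesAvoid {σ : Finset V | σ.card ≤ 1} Kl Ll := by
        obtain ⟨x₀, hx₀⟩ := hex
        set F := Finset.univ.filter (fun x : V => x < m) with hF
        have hFne : F.Nonempty := ⟨x₀, by simp [hF, hx₀]⟩
        set m' := F.max' hFne with hm'
        have hm'lt : m' < m := (Finset.mem_filter.1 (F.max'_mem hFne)).2
        have hiff : ∀ x : V, x < m ↔ x ≤ m' := by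
          intro x
          constructor
          · intro hx; exact F.le_max' x (by simp [hF, hx])
          · intro hx; exact lt_of_le_of_lt hx hm'lt
        have e1 : Kl = {σ : Finset V | σ ∈ VRComplex V t ∧ ∀ x ∈ σ, x ≤ m'} := by
          ext σ
          simp only [hKl, Set.mem_setOf_eq]
          exact and_congr_right fun _ => forall₂_congr fun x _ => hiff x
        have e2 : Ll = {σ : Finset V | σ ∈ TreeComplex V G t ∧ ∀ x ∈ σ, x ≤ m'} := by
          ext σ
          simp only [hLl, Set.mem_setOf_eq]
          exact and_congr_right fun _ => forall₂_congr fun x _ => hiff x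
        rw [e1, e2]
        apply ih
        have hsub : Finset.univ.filter (fun x : V => x < m') ⊂ F := by
          rw [hF]
          constructor
          · intro x hx
            simp only [Finset.mem_filter, Finset.mem_univ, true_and] at hx ⊢
            exact lt_trans hx hm'lt
          · intro hsub'
            have : m' ∈ Finset.univ.filter (fun x : V => x < m') :=
              hsub' (by simp [hx₀, hm'lt])
            simp at this
        have := Finset.card_lt_card hsub
        omega
      have step4 : CollapsesAvoid {σ : Finset V | σ.card ≤ 1} (Kl ∪ Cm) (Ll ∪ Cm) := by
        refine CollapsesAvoid.union step3 ?_ ?_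
        · rintro ρ hρ hρK
          exact absurd (hρK.2 m (hmemCm ρ hρ)) (lt_irrefl m)
        · rintro ρ hρ σ hσ hsub
          have hcρ : ρ.card ≤ 2 := by
            rcases hρ with rfl | ⟨rfl, -⟩
            · simp
            · rw [hpairc]
          have := Finset.card_lt_card hsub
          simp only [Set.mem_setOf_eq]
          omega
      have step5 : Ll ∪ Cm = {σ : Finset V | σ ∈ TreeComplex V G t ∧ ∀ x ∈ σ, x ≤ m} := by
        ext σ
        simp only [Set.mem_union, hLl, hCm, Set.mem_setOf_eq]
        constructor
        · rintro (⟨hσt, hbd⟩ | hσc)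
          · exact ⟨hσt, fun x hx => (hbd x hx).le⟩
          · rcases hσc with rfl | ⟨rfl, hdist⟩
            · exact ⟨Or.inl ⟨m, rfl⟩, by simp⟩
            · refine ⟨Or.inr ⟨p, m, hpadj, hdist, Finset.pair_comm m p⟩, ?_⟩
              intro x hx
              simp only [Finset.mem_insert, Finset.mem_singleton] at hx
              rcases hx with rfl | rfl
              · exact le_refl x
              · exact hplt.le
        · rintro ⟨hσt, hbd⟩
          by_cases hmσ : m ∈ σ
          · right
            rcases hσt with ⟨v, rfl⟩ | ⟨a, b, hab, hdab, rfl⟩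
            · rw [Finset.mem_singleton] at hmσ
              exact Or.inl (by rw [hmσ])
            · right
              rcases Finset.mem_insert.1 hmσ with hma | hmb
              · have hbm : b ≠ m := fun h => hab.ne (hma.symm.trans h.symm)
                have hblt : b < m := lt_of_le_of_ne (hbd b (by simp)) hbm
                have hadjbm : G.Adj b m := by rw [hma]; exact hab.symm
                have hbp : b = p := huniq b hadjbm hblt
                refine ⟨?_, ?_⟩
                · rw [hma, hbp]
                · rw [← hbp, hma, dist_comm]; exact hdab
              · rw [Finset.mem_singleton] at hmb
                have ham : a ≠ m := fun h => hab.ne (h.trans hmb)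
                have halt : a < m := lt_of_le_of_ne (hbd a (by simp)) ham
                have hadjam : G.Adj a m := by rw [hmb]; exact hab
                have hap : a = p := huniq a hadjam halt
                refine ⟨?_, ?_⟩
                · rw [hmb, hap]; exact Finset.pair_comm p b
                · rw [← hap, hmb]; exact hdab
          · left
            exact ⟨hσt, fun x hx => lt_of_le_of_ne (hbd x hx) (fun h => hmσ (h ▸ hx))⟩
      rw [step2] at step1
      rw [step5] at step4
      exact step1.trans step4
  -- assemble
  have hVne : Nonempty V := hT.isConnected.nonempty
  have huniv : (Finset.univ : Finset V).Nonempty := Finset.univ_nonempty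
  set mtop := (Finset.univ : Finset V).max' huniv with hmtop
  have htople : ∀ x : V, x ≤ mtop := fun x => Finset.le_max' _ x (Finset.mem_univ x)
  have eu : {σ : Finset V | σ ∈ VRComplex V u ∧ ∀ x ∈ σ, x ≤ mtop} = VRComplex V u := by
    ext σ
    simp only [Set.mem_setOf_eq]
    exact ⟨fun h => h.1, fun h => ⟨h, fun x _ => htople x⟩⟩
  have et : {σ : Finset V | σ ∈ VRComplex V t ∧ ∀ x ∈ σ, x ≤ mtop} = VRComplex V t := by
    ext σ
    simp only [Set.mem_setOf_eq]
    exact ⟨fun h => h.1, fun h => ⟨h, fun x _ => htople x⟩⟩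
  have etr : {σ : Finset V | σ ∈ TreeComplex V G t ∧ ∀ x ∈ σ, x ≤ mtop}
      = TreeComplex V G t := by
    ext σ
    simp only [Set.mem_setOf_eq]
    exact ⟨fun h => h.1, fun h => ⟨h, fun x _ => htople x⟩⟩
  have h1 := phase1 (Finset.univ.filter (fun x => x < mtop)).card mtop le_rfl
  have h2 := phase2 (Finset.univ.filter (fun x => x < mtop)).card mtop le_rfl
  rw [eu, et] at h1
  rw [et, etr] at h2
  exact ⟨h1.collapses, h2.collapses⟩
end
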